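/- arXiv:2004.06388 — 4 statements merged into one kernel-verified Lean document; each statement's English description precedes it below -/
import Mathlib

section
/- Let A ∈ ℝ^{n×n} be a singular matrix and let A = M − N be a weak proper splitting of the second type of A. For each λ > 0 let B_λ = M_λ − N_λ be a weak splitting of the second type of B_λ = AᵀA + λI. Suppose that, as λ → 0⁺, the matrices N_λB_λ⁻¹ converge entrywise to a matrix L satisfying NA† ≥ L ≥ 0. Then ρ(M†N) < 1, and for every real number r such that ρ(M_λ⁻¹N_λ) → r as λ → 0⁺, one has r ≤ ρ(M†N). -/
open Matrix Filter Topology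

/-- The spectral radius of a real square matrix: the maximum (supremum) of the
moduli of its complex eigenvalues. -/
noncomputable def specRad {n : Type*} [Fintype n] [DecidableEq n]
    (B : Matrix n n ℝ) : ℝ :=
  sSup ((fun z : ℂ => ‖z‖) '' spectrum ℂ (B.map Complex.ofReal))

/-- Entrywise order on real matrices: `entryLE A B` means every entry of `A` is
at most the corresponding entry of `B`. -/
def entryLE {m n : Type*} (A B : Matrix m n ℝ) : Prop :=
  ∀ i j, A i j ≤ B i j

/-- `X` is the Moore–Penrose inverse of `A`. -/
def IsMoorePenrose {m n : Type*} [Fintype m] [Fintype n]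
    (A : Matrix m n ℝ) (X : Matrix n m ℝ) : Prop :=
  A * X * A = A ∧ X * A * X = X ∧ (A * X)ᵀ = A * X ∧ (X * A)ᵀ = X * A

namespace StmtAux

attribute [local instance] Matrix.linftyOpNormedAddCommGroup Matrix.linftyOpNormedRing
  Matrix.linftyOpNormedAlgebra

variable {m : ℕ}

lemma spec_iff_eigen (B : Matrix (Fin m) (Fin m) ℂ) (z : ℂ) :
    z ∈ spectrum ℂ B ↔ ∃ v, v ≠ 0 ∧ B *ᵥ v = z • v := by
  rw [spectrum.mem_iff, Matrix.isUnit_iff_isUnit_det, isUnit_iff_ne_zero, not_not,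
    ← Matrix.exists_mulVec_eq_zero_iff]
  constructor
  · rintro ⟨v, hv, h⟩
    refine ⟨v, hv, ?_⟩
    rw [Algebra.algebraMap_eq_smul_one, Matrix.sub_mulVec, Matrix.smul_mulVec,
      Matrix.one_mulVec] at h
    exact (sub_eq_zero.mp h).symm
  · rintro ⟨v, hv, h⟩
    refine ⟨v, hv, ?_⟩
    rw [Algebra.algebraMap_eq_smul_one, Matrix.sub_mulVec, Matrix.smul_mulVec,
      Matrix.one_mulVec, h, sub_self]

lemma spec_swap {P Q : Matrix (Fin m) (Fin m) ℂ} {z : ℂ} (hz : z ≠ 0)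
    (h : z ∈ spectrum ℂ (P * Q)) : z ∈ spectrum ℂ (Q * P) := by
  rw [spec_iff_eigen] at h ⊢
  obtain ⟨v, hv, hev⟩ := h
  refine ⟨Q *ᵥ v, ?_, ?_⟩
  · intro h0
    apply hv
    have : (P * Q) *ᵥ v = 0 := by rw [← Matrix.mulVec_mulVec, h0, Matrix.mulVec_zero]
    rw [hev] at this
    exact smul_eq_zero.mp this |>.resolve_left hz
  · rw [Matrix.mulVec_mulVec, mul_assoc, ← Matrix.mulVec_mulVec, hev, Matrix.mulVec_smul]

lemma specRad_nonneg (B : Matrix (Fin m) (Fin m) ℝ) : 0 ≤ specRad B := by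
  apply Real.sSup_nonneg
  rintro x ⟨z, _, rfl⟩
  exact norm_nonneg z

lemma specRad_bddAbove (B : Matrix (Fin m) (Fin m) ℝ) :
    BddAbove ((fun z : ℂ => ‖z‖) '' spectrum ℂ (B.map Complex.ofReal)) :=
  ((Matrix.finite_spectrum _).image _).bddAbove

lemma exists_specRad_attained [Nonempty (Fin m)] (B : Matrix (Fin m) (Fin m) ℝ) :
    ∃ z ∈ spectrum ℂ (B.map Complex.ofReal), ‖z‖ = specRad B := by
  have hne : (spectrum ℂ (B.map Complex.ofReal)).Nonempty := spectrum.nonempty _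
  have hfin : ((fun z : ℂ => ‖z‖) '' spectrum ℂ (B.map Complex.ofReal)).Finite :=
    (Matrix.finite_spectrum _).image _
  obtain ⟨z, hz, hz2⟩ := (hne.image (fun z : ℂ => ‖z‖)).csSup_mem hfin
  exact ⟨z, hz, hz2⟩

lemma entry_mul_nonneg {P Q : Matrix (Fin m) (Fin m) ℝ} (hP : entryLE 0 P) (hQ : entryLE 0 Q) :
    entryLE 0 (P * Q) := by
  intro i j
  simp only [Matrix.zero_apply, Matrix.mul_apply]
  exact Finset.sum_nonneg fun k _ => mul_nonneg (hP i k) (hQ k j)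

lemma entry_pow_nonneg {P : Matrix (Fin m) (Fin m) ℝ} (hP : entryLE 0 P) (k : ℕ) :
    entryLE 0 (P ^ k) := by
  induction k with
  | zero => intro i j; by_cases h : i = j <;> simp [pow_zero, Matrix.one_apply, h]
  | succ k ih => rw [pow_succ]; exact entry_mul_nonneg ih hP

lemma mulVec_apply' (P : Matrix (Fin m) (Fin m) ℝ) (w : Fin m → ℝ) (i : Fin m) :
    (P *ᵥ w) i = ∑ j, P i j * w j := rfl

lemma mulVec_nonneg {P : Matrix (Fin m) (Fin m) ℝ} (hP : entryLE 0 P) {w : Fin m → ℝ}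
    (hw : ∀ i, 0 ≤ w i) : ∀ i, 0 ≤ (P *ᵥ w) i := by
  intro i
  rw [mulVec_apply']
  exact Finset.sum_nonneg fun j _ => mul_nonneg (hP i j) (hw j)

lemma mulVec_mono {P Q : Matrix (Fin m) (Fin m) ℝ} (h : entryLE P Q) {w : Fin m → ℝ}
    (hw : ∀ i, 0 ≤ w i) : ∀ i, (P *ᵥ w) i ≤ (Q *ᵥ w) i := by
  intro i
  rw [mulVec_apply', mulVec_apply']
  exact Finset.sum_le_sum fun j _ => mul_le_mul_of_nonneg_right (h i j) (hw j)

lemma cmap_mul (P Q : Matrix (Fin m) (Fin m) ℝ) :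
    (P * Q).map Complex.ofReal = P.map Complex.ofReal * Q.map Complex.ofReal := by
  ext i j
  simp [Matrix.mul_apply, Matrix.map_apply]

lemma cmap_one : ((1 : Matrix (Fin m) (Fin m) ℝ)).map Complex.ofReal = 1 := by
  ext i j
  by_cases h : i = j <;> simp [Matrix.one_apply, h, Matrix.map_apply]

lemma cmap_add (P Q : Matrix (Fin m) (Fin m) ℝ) :
    (P + Q).map Complex.ofReal = P.map Complex.ofReal + Q.map Complex.ofReal := by
  ext i j; simp [Matrix.map_apply]

lemma cmap_sub (P Q : Matrix (Fin m) (Fin m) ℝ) :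
    (P - Q).map Complex.ofReal = P.map Complex.ofReal - Q.map Complex.ofReal := by
  ext i j; simp [Matrix.map_apply]

lemma cmap_pow (P : Matrix (Fin m) (Fin m) ℝ) (k : ℕ) :
    (P ^ k).map Complex.ofReal = P.map Complex.ofReal ^ k := by
  induction k with
  | zero =>
    ext i j
    by_cases h : i = j <;> simp [pow_zero, Matrix.one_apply, h, Matrix.map_apply]
  | succ k ih =>
    rw [pow_succ, pow_succ, ← ih]
    ext i j
    simp [Matrix.mul_apply, Matrix.map_apply]

/-- Collatz–Wielandt style eigenvalue bound. -/
lemma abs_le_of_cw {X : Matrix (Fin m) (Fin m) ℝ} (hX : entryLE 0 X) {w : Fin m → ℝ}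
    (hw : ∀ i, 0 < w i) {c : ℝ} (hXw : ∀ i, (X *ᵥ w) i ≤ c * w i) {z : ℂ}
    (hz : z ∈ spectrum ℂ (X.map Complex.ofReal)) : ‖z‖ ≤ c := by
  obtain ⟨v, hv, hev⟩ := (spec_iff_eigen _ _).mp hz
  obtain ⟨i1, hi1⟩ : ∃ i, v i ≠ 0 := by
    by_contra h
    push_neg at h
    exact hv (funext fun i => h i)
  haveI : Nonempty (Fin m) := ⟨i1⟩
  set f : Fin m → ℝ := fun i => ‖v i‖ / w i with hf
  obtain ⟨i0, -, hi0⟩ := Finset.exists_mem_eq_sup' (Finset.univ_nonempty) f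
  set t : ℝ := Finset.univ.sup' Finset.univ_nonempty f with htdef
  have ht_pos : 0 < t := by
    have h1 : f i1 ≤ t := Finset.le_sup' f (Finset.mem_univ i1)
    have : 0 < f i1 := div_pos (by simpa using norm_pos_iff.mpr hi1) (hw i1)
    linarith
  have hbound : ∀ j, ‖v j‖ ≤ t * w j := by
    intro j
    have h : f j ≤ t := Finset.le_sup' f (Finset.mem_univ j)
    rw [hf] at h
    exact (div_le_iff₀ (hw j)).mp h
  have heq0 : ‖v i0‖ = t * w i0 := by
    have h : ‖v i0‖ / w i0 = t := hi0.symm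
    exact (div_eq_iff (hw i0).ne').mp h
  have key : ‖z‖ * (t * w i0) ≤ c * (t * w i0) := by
    have h1 : ‖z‖ * ‖v i0‖ = ‖(z • v) i0‖ := by
      rw [Pi.smul_apply, smul_eq_mul, norm_mul]
    have h2 : (z • v) i0 = (X.map Complex.ofReal *ᵥ v) i0 := by rw [hev]
    have h3 : ‖(X.map Complex.ofReal *ᵥ v) i0‖ ≤ ∑ j, X i0 j * ‖v j‖ := by
      have : (X.map Complex.ofReal *ᵥ v) i0 = ∑ j, (X i0 j : ℂ) * v j := rfl
      rw [this]
      refine le_trans (norm_sum_le _ _) ?_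
      apply Finset.sum_le_sum
      intro j _
      rw [norm_mul, Complex.norm_real, Real.norm_eq_abs, abs_of_nonneg (hX i0 j)]
    have h4 : ∑ j, X i0 j * ‖v j‖ ≤ ∑ j, X i0 j * (t * w j) :=
      Finset.sum_le_sum fun j _ => mul_le_mul_of_nonneg_left (hbound j) (hX i0 j)
    have h5 : ∑ j, X i0 j * (t * w j) = t * (X *ᵥ w) i0 := by
      rw [mulVec_apply', Finset.mul_sum]
      exact Finset.sum_congr rfl fun j _ => by ring
    have h6 : t * (X *ᵥ w) i0 ≤ t * (c * w i0) :=
      mul_le_mul_of_nonneg_left (hXw i0) ht_pos.le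
    calc ‖z‖ * (t * w i0) = ‖z‖ * ‖v i0‖ := by rw [heq0]
      _ = ‖(z • v) i0‖ := h1
      _ = ‖(X.map Complex.ofReal *ᵥ v) i0‖ := by rw [h2]
      _ ≤ ∑ j, X i0 j * ‖v j‖ := h3
      _ ≤ ∑ j, X i0 j * (t * w j) := h4
      _ = t * (X *ᵥ w) i0 := h5
      _ ≤ t * (c * w i0) := h6
      _ = c * (t * w i0) := by ring
  have hpos : 0 < t * w i0 := mul_pos ht_pos (hw i0)
  exact le_of_mul_le_mul_right key hpos

lemma specRad_le_of_cw (T X : Matrix (Fin m) (Fin m) ℝ)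
    (hspec : ∀ z ∈ spectrum ℂ (T.map Complex.ofReal), z ≠ 0 →
      z ∈ spectrum ℂ (X.map Complex.ofReal))
    (hX : entryLE 0 X) {w : Fin m → ℝ} (hw : ∀ i, 0 < w i) {c : ℝ} (hc : 0 ≤ c)
    (hXw : ∀ i, (X *ᵥ w) i ≤ c * w i) : specRad T ≤ c := by
  apply Real.sSup_le _ hc
  rintro x ⟨z, hz, rfl⟩
  by_cases h0 : z = 0
  · simpa [h0] using hc
  · exact abs_le_of_cw hX hw hXw (hspec z hz h0)

lemma norm_cmap (R : Matrix (Fin m) (Fin m) ℝ) : ‖R.map Complex.ofReal‖ = ‖R‖ := by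
  have h : ‖R.map Complex.ofReal‖₊ = ‖R‖₊ := by
    rw [Matrix.linfty_opNNNorm_def, Matrix.linfty_opNNNorm_def]
    apply Finset.sup_congr rfl
    intro i _
    apply Finset.sum_congr rfl
    intro j _
    simp [Matrix.map_apply]
  calc ‖R.map Complex.ofReal‖ = ((‖R.map Complex.ofReal‖₊ : NNReal) : ℝ) := rfl
    _ = ‖R‖ := by rw [h]; rfl

/-- For `s` above the spectral radius of an entrywise nonnegative matrix `Y`,
there is a nonnegative matrix `W` with `(s • 1 - Y) * W = 1`. -/
lemma resolvent_nonneg {Y : Matrix (Fin m) (Fin m) ℝ} (hY : entryLE 0 Y) {s : ℝ}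
    (hs : specRad Y < s) :
    ∃ W : Matrix (Fin m) (Fin m) ℝ, entryLE 0 W ∧
      (s • (1 : Matrix (Fin m) (Fin m) ℝ) - Y) * W = 1 := by
  have hs0 : 0 < s := lt_of_le_of_lt (specRad_nonneg Y) hs
  set a : Matrix (Fin m) (Fin m) ℂ := Y.map Complex.ofReal with ha
  have hsrle : spectralRadius ℂ a ≤ ENNReal.ofReal (specRad Y) := by
    rw [spectralRadius]
    apply iSup₂_le
    intro z hz
    rw [← ENNReal.ofReal_coe_nnreal, coe_nnnorm]
    apply ENNReal.ofReal_le_ofReal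
    exact le_csSup ((Matrix.finite_spectrum _).image _).bddAbove ⟨z, hz, rfl⟩
  have hsr : spectralRadius ℂ a < ENNReal.ofReal s :=
    lt_of_le_of_lt hsrle (by
      rw [ENNReal.ofReal_lt_ofReal_iff hs0]
      exact hs)
  have hG := spectrum.pow_nnnorm_pow_one_div_tendsto_nhds_spectralRadius a
  have hev : ∀ᶠ k : ℕ in atTop, (‖a ^ k‖₊ : ENNReal) ^ (1 / (k : ℝ)) < ENNReal.ofReal s :=
    hG.eventually_lt_const hsr
  obtain ⟨k, hk1, hklt⟩ :
      ∃ k : ℕ, 1 ≤ k ∧ (‖a ^ k‖₊ : ENNReal) ^ (1 / (k : ℝ)) < ENNReal.ofReal s := by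
    obtain ⟨k, hk⟩ := (hev.and (eventually_ge_atTop 1)).exists
    exact ⟨k, hk.2, hk.1⟩
  have hkpos : (0 : ℝ) < k := by exact_mod_cast hk1
  have hnorm : ‖Y ^ k‖ < s ^ k := by
    have h1 : ((‖a ^ k‖₊ : ENNReal) ^ (1 / (k : ℝ))) ^ (k : ℝ) < (ENNReal.ofReal s) ^ (k : ℝ) :=
      ENNReal.rpow_lt_rpow hklt hkpos
    rw [← ENNReal.rpow_mul, one_div, inv_mul_cancel₀ (ne_of_gt hkpos), ENNReal.rpow_one,
      ENNReal.rpow_natCast, ← ENNReal.ofReal_pow hs0.le, ← ENNReal.ofReal_coe_nnreal, coe_nnnorm] at h1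
    have h2 := (ENNReal.ofReal_lt_ofReal_iff (by positivity)).mp h1
    calc ‖Y ^ k‖ = ‖(Y ^ k).map Complex.ofReal‖ := (norm_cmap _).symm
      _ = ‖a ^ k‖ := by rw [cmap_pow]
      _ < s ^ k := h2
  set Z : Matrix (Fin m) (Fin m) ℝ := (s ^ k)⁻¹ • Y ^ k with hZ
  have hZnorm : ‖Z‖ < 1 := by
    rw [hZ, norm_smul, Real.norm_eq_abs, abs_of_pos (by positivity)]
    rw [inv_mul_lt_iff₀ (by positivity), mul_one]
    exact hnorm
  have hZ0 : entryLE 0 Z := by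
    intro i j
    exact mul_nonneg (by positivity) (entry_pow_nonneg hY k i j)
  haveI : CompleteSpace (Matrix (Fin m) (Fin m) ℝ) := FiniteDimensional.complete ℝ _
  set u : Matrix (Fin m) (Fin m) ℝ := ∑' i : ℕ, Z ^ i with hu
  have hsumZ : Summable (fun i : ℕ => Z ^ i) := summable_geometric_of_norm_lt_one hZnorm
  have hmul : (1 - Z) * u = 1 := mul_neg_geom_series Z hZnorm
  have hentry : ∀ i j, HasSum (fun nn : ℕ => (Z ^ nn) i j) (u i j) := by
    intro i j
    have hcont : Continuous (Matrix.entryLinearMap ℝ ℝ i j :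
        Matrix (Fin m) (Fin m) ℝ →ₗ[ℝ] ℝ) := LinearMap.continuous_of_finiteDimensional _
    have := (hsumZ.hasSum).map (Matrix.entryLinearMap ℝ ℝ i j) hcont
    exact this
  have hu0 : entryLE 0 u := by
    intro i j
    have := (hentry i j).tsum_eq
    rw [Matrix.zero_apply, ← this]
    exact tsum_nonneg fun nn => entry_pow_nonneg hZ0 nn i j
  set G : Matrix (Fin m) (Fin m) ℝ :=
    ∑ i ∈ Finset.range k, (s • (1 : Matrix (Fin m) (Fin m) ℝ)) ^ i * Y ^ (k - 1 - i) with hG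
  have hcomm : Commute (s • (1 : Matrix (Fin m) (Fin m) ℝ)) Y := by
    unfold Commute SemiconjBy
    rw [Matrix.smul_mul, Matrix.mul_smul, one_mul, mul_one]
  have hGmul : (s • (1 : Matrix (Fin m) (Fin m) ℝ) - Y) * G
      = (s ^ k) • (1 : Matrix (Fin m) (Fin m) ℝ) - Y ^ k := by
    rw [hG, hcomm.mul_geom_sum₂ k, smul_pow, one_pow]
  have hfact : (s ^ k) • (1 : Matrix (Fin m) (Fin m) ℝ) - Y ^ k = (s ^ k) • (1 - Z) := by
    rw [hZ, smul_sub, smul_smul, mul_inv_cancel₀ (by positivity : (s : ℝ) ^ k ≠ 0), one_smul]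
  have hG0 : entryLE 0 G := by
    intro i j
    rw [Matrix.zero_apply, hG, Matrix.sum_apply]
    apply Finset.sum_nonneg
    intro l _
    have h1 : (s • (1 : Matrix (Fin m) (Fin m) ℝ)) ^ l * Y ^ (k - 1 - l)
        = (s ^ l) • (Y ^ (k - 1 - l)) := by
      rw [smul_pow, one_pow, Matrix.smul_mul, one_mul]
    rw [h1, Matrix.smul_apply, smul_eq_mul]
    exact mul_nonneg (by positivity) (entry_pow_nonneg hY _ i j)
  refine ⟨(s ^ k)⁻¹ • (G * u), ?_, ?_⟩
  · intro i j
    rw [Matrix.zero_apply, Matrix.smul_apply, smul_eq_mul]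
    exact mul_nonneg (by positivity) (entry_mul_nonneg hG0 hu0 i j)
  · calc (s • (1 : Matrix (Fin m) (Fin m) ℝ) - Y) * ((s ^ k)⁻¹ • (G * u))
        = (s ^ k)⁻¹ • ((s • (1 : Matrix (Fin m) (Fin m) ℝ) - Y) * (G * u)) := by
          rw [Matrix.mul_smul]
      _ = (s ^ k)⁻¹ • ((s ^ k) • ((1 - Z) * u)) := by
          rw [← mul_assoc, hGmul, hfact, Matrix.smul_mul]
      _ = 1 := by
          rw [hmul, smul_smul, inv_mul_cancel₀ (by positivity : (s : ℝ) ^ k ≠ 0), one_smul]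

lemma resolvent_vector {Y : Matrix (Fin m) (Fin m) ℝ} (hY : entryLE 0 Y) {s : ℝ}
    (hs : specRad Y < s) (hs0 : 0 < s) :
    ∃ w : Fin m → ℝ, (∀ i, 0 < w i) ∧ ∀ i, (Y *ᵥ w) i = s * w i - 1 := by
  obtain ⟨W, hW0, hW⟩ := resolvent_nonneg hY hs
  set e : Fin m → ℝ := fun _ => 1 with he
  set w : Fin m → ℝ := W *ᵥ e with hw
  have hw0 : ∀ i, 0 ≤ w i := by
    intro i
    rw [hw, mulVec_apply']
    exact Finset.sum_nonneg fun j _ => mul_nonneg (hW0 i j) zero_le_one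
  have hYW : Y * W = s • W - 1 := by
    have h1 : s • W - Y * W = 1 := by
      calc s • W - Y * W = (s • (1 : Matrix (Fin m) (Fin m) ℝ) - Y) * W := by
            rw [Matrix.sub_mul, Matrix.smul_mul, one_mul]
        _ = 1 := hW
    calc Y * W = s • W - (s • W - Y * W) := by abel
      _ = s • W - 1 := by rw [h1]
  have heq : ∀ i, (Y *ᵥ w) i = s * w i - 1 := by
    intro i
    have h2 : Y *ᵥ w = (s • W - 1) *ᵥ e := by
      rw [hw, Matrix.mulVec_mulVec, hYW]
    rw [h2, Matrix.sub_mulVec, Matrix.smul_mulVec, Matrix.one_mulVec]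
    simp [hw, he]
  refine ⟨w, ?_, heq⟩
  intro i
  have h3 : 0 ≤ (Y *ᵥ w) i := mulVec_nonneg hY hw0 i
  have h4 := heq i
  nlinarith [hw0 i]

lemma eq_of_mulVec_eq {P Q : Matrix (Fin m) (Fin m) ℝ} (h : ∀ x, P *ᵥ x = Q *ᵥ x) : P = Q := by
  ext i j
  have := congr_fun (h (Pi.single j 1)) i
  simpa using this

lemma proj_eq_of_range {P Q : Matrix (Fin m) (Fin m) ℝ} (hP : Pᵀ = P) (hQ : Qᵀ = Q)
    (hPP : P * P = P) (hQQ : Q * Q = Q)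
    (hrg : LinearMap.range P.mulVecLin = LinearMap.range Q.mulVecLin) : P = Q := by
  have hact : ∀ (R S : Matrix (Fin m) (Fin m) ℝ), R * R = R →
      LinearMap.range R.mulVecLin = LinearMap.range S.mulVecLin → R * S = S := by
    intro R S hRR hr
    apply eq_of_mulVec_eq
    intro x
    have hmem : S *ᵥ x ∈ LinearMap.range R.mulVecLin := by
      rw [hr]; exact ⟨x, rfl⟩
    obtain ⟨z, hz⟩ := hmem
    have hz' : R *ᵥ z = S *ᵥ x := hz
    calc (R * S) *ᵥ x = R *ᵥ (S *ᵥ x) := (Matrix.mulVec_mulVec _ _ _).symm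
      _ = R *ᵥ (R *ᵥ z) := by rw [hz']
      _ = (R * R) *ᵥ z := Matrix.mulVec_mulVec _ _ _
      _ = R *ᵥ z := by rw [hRR]
      _ = S *ᵥ x := hz'
  have hPQ : P * Q = Q := hact P Q hPP hrg
  have hQP : Q * P = P := hact Q P hQQ hrg.symm
  calc P = Pᵀ := hP.symm
    _ = (Q * P)ᵀ := by rw [hQP]
    _ = Pᵀ * Qᵀ := Matrix.transpose_mul _ _
    _ = P * Q := by rw [hP, hQ]
    _ = Q := hPQ

lemma proj_eq_of_ker {P Q : Matrix (Fin m) (Fin m) ℝ} (hP : Pᵀ = P) (hQ : Qᵀ = Q)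
    (hPP : P * P = P) (hQQ : Q * Q = Q)
    (hkr : LinearMap.ker P.mulVecLin = LinearMap.ker Q.mulVecLin) : P = Q := by
  have hact : ∀ (R S : Matrix (Fin m) (Fin m) ℝ), R * R = R →
      LinearMap.ker R.mulVecLin = LinearMap.ker S.mulVecLin → S * R = S := by
    intro R S hRR hk
    apply eq_of_mulVec_eq
    intro x
    have hker : R *ᵥ (x - R *ᵥ x) = 0 := by
      rw [Matrix.mulVec_sub, Matrix.mulVec_mulVec, hRR, sub_self]
    have hmem : (x - R *ᵥ x) ∈ LinearMap.ker R.mulVecLin := hker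
    rw [hk] at hmem
    have h0 : S *ᵥ (x - R *ᵥ x) = 0 := hmem
    rw [Matrix.mulVec_sub, Matrix.mulVec_mulVec, sub_eq_zero] at h0
    exact h0.symm
  have hQP : Q * P = Q := hact P Q hPP hkr
  have hPQ : P * Q = P := hact Q P hQQ hkr.symm
  calc P = Pᵀ := hP.symm
    _ = (P * Q)ᵀ := by rw [hPQ]
    _ = Qᵀ * Pᵀ := Matrix.transpose_mul _ _
    _ = Q * P := by rw [hP, hQ]
    _ = Q := hQP

lemma range_of_mp {A B : Matrix (Fin m) (Fin m) ℝ} (h : A * B * A = A) :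
    LinearMap.range (A * B).mulVecLin = LinearMap.range A.mulVecLin := by
  apply le_antisymm
  · rw [Matrix.mulVecLin_mul]
    exact LinearMap.range_comp_le_range _ _
  · rintro y ⟨x, rfl⟩
    refine ⟨A *ᵥ x, ?_⟩
    show (A * B) *ᵥ (A *ᵥ x) = A *ᵥ x
    rw [Matrix.mulVec_mulVec, h]

lemma ker_of_mp {A B : Matrix (Fin m) (Fin m) ℝ} (h : A * B * A = A) :
    LinearMap.ker (B * A).mulVecLin = LinearMap.ker A.mulVecLin := by
  apply le_antisymm
  · intro x hx
    have hx' : (B * A) *ᵥ x = 0 := hx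
    show A *ᵥ x = 0
    have hABA : A * (B * A) = A := by rw [← mul_assoc, h]
    calc A *ᵥ x = (A * (B * A)) *ᵥ x := by rw [hABA]
      _ = A *ᵥ ((B * A) *ᵥ x) := (Matrix.mulVec_mulVec _ _ _).symm
      _ = 0 := by rw [hx', Matrix.mulVec_zero]
  · intro x hx
    have hx' : A *ᵥ x = 0 := hx
    show (B * A) *ᵥ x = 0
    rw [← Matrix.mulVec_mulVec, hx', Matrix.mulVec_zero]

lemma Bdet (A : Matrix (Fin m) (Fin m) ℝ) {l : ℝ} (hl : 0 < l) :
    IsUnit (Aᵀ * A + l • (1 : Matrix (Fin m) (Fin m) ℝ)).det := by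
  rw [isUnit_iff_ne_zero]
  intro hdet
  obtain ⟨v, hv, h0⟩ := (Matrix.exists_mulVec_eq_zero_iff).mpr hdet
  have h1 : v ⬝ᵥ ((Aᵀ * A + l • (1 : Matrix (Fin m) (Fin m) ℝ)) *ᵥ v) = 0 := by
    rw [h0, dotProduct_zero]
  rw [Matrix.add_mulVec, dotProduct_add] at h1
  have h2 : v ⬝ᵥ ((Aᵀ * A) *ᵥ v) = (A *ᵥ v) ⬝ᵥ (A *ᵥ v) := by
    rw [← Matrix.mulVec_mulVec, Matrix.dotProduct_mulVec, Matrix.vecMul_transpose]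
  have h3 : v ⬝ᵥ ((l • (1 : Matrix (Fin m) (Fin m) ℝ)) *ᵥ v) = l * (v ⬝ᵥ v) := by
    rw [Matrix.smul_mulVec, Matrix.one_mulVec, dotProduct_smul, smul_eq_mul]
  rw [h2, h3] at h1
  have h4 : 0 ≤ (A *ᵥ v) ⬝ᵥ (A *ᵥ v) := Finset.sum_nonneg fun j _ => mul_self_nonneg _
  have h5 : 0 < v ⬝ᵥ v := by
    obtain ⟨i, hi⟩ : ∃ i, v i ≠ 0 := by
      by_contra hc; push_neg at hc; exact hv (funext fun i => hc i)
    apply Finset.sum_pos' (fun j _ => mul_self_nonneg _)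
    exact ⟨i, Finset.mem_univ i, mul_self_pos.mpr hi⟩
  nlinarith

end StmtAux
theorem stmt1 {n : ℕ} (A M N : Matrix (Fin n) (Fin n) ℝ)
    (Adag Mdag : Matrix (Fin n) (Fin n) ℝ)
    (hAsing : ¬ IsUnit A.det)
    (hAdag : IsMoorePenrose A Adag) (hMdag : IsMoorePenrose M Mdag)
    -- `A = M − N` is a weak proper splitting of the second type of `A`
    (hsplit : A = M - N)
    (hrange : LinearMap.range M.mulVecLin = LinearMap.range A.mulVecLin)
    (hker : LinearMap.ker M.mulVecLin = LinearMap.ker A.mulVecLin)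
    (hweak : entryLE 0 (N * Mdag))
    -- for each `λ > 0`, `B_λ = M_λ − N_λ` is a weak splitting of the second type
    (Mlam Nlam : ℝ → Matrix (Fin n) (Fin n) ℝ)
    (hBsplit : ∀ l : ℝ, 0 < l →
      Aᵀ * A + l • (1 : Matrix (Fin n) (Fin n) ℝ) = Mlam l - Nlam l)
    (hMinv : ∀ l : ℝ, 0 < l → IsUnit (Mlam l).det)
    (hweakl : ∀ l : ℝ, 0 < l → entryLE 0 (Nlam l * (Mlam l)⁻¹))
    -- `N_λ B_λ⁻¹ → L` entrywise as `λ → 0⁺`, with `NA† ≥ L ≥ 0`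
    (L : Matrix (Fin n) (Fin n) ℝ)
    (hLtend : Tendsto
      (fun l : ℝ => Nlam l * (Aᵀ * A + l • (1 : Matrix (Fin n) (Fin n) ℝ))⁻¹)
      (𝓝[>] 0) (𝓝 L))
    (hL0 : entryLE 0 L) (hLA : entryLE L (N * Adag)) :
    specRad (Mdag * N) < 1 ∧
      ∀ r : ℝ, Tendsto (fun l : ℝ => specRad ((Mlam l)⁻¹ * Nlam l)) (𝓝[>] 0) (𝓝 r) →
        r ≤ specRad (Mdag * N) := by
  classical
  open StmtAux in
  -- `n ≥ 1`
  have hn0 : n ≠ 0 := by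
    intro h
    subst h
    exact hAsing (by simp)
  haveI : Nonempty (Fin n) := ⟨⟨0, Nat.pos_of_ne_zero hn0⟩⟩
  obtain ⟨hA1, hA2, hA3, hA4⟩ := hAdag
  obtain ⟨hM1, hM2, hM3, hM4⟩ := hMdag
  have hN : N = M - A := by rw [hsplit]; abel
  -- the two Moore–Penrose projections agree for `A` and `M`
  have hE : A * Adag = M * Mdag := by
    apply proj_eq_of_range hA3 hM3
    · rw [← mul_assoc, hA1]
    · rw [← mul_assoc, hM1]
    · exact (range_of_mp hA1).trans (hrange.symm.trans (range_of_mp hM1).symm)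
  have hF : Adag * A = Mdag * M := by
    apply proj_eq_of_ker hA4 hM4
    · rw [← mul_assoc, hA2]
    · rw [← mul_assoc, hM2]
    · exact (ker_of_mp hA1).trans (hker.symm.trans (ker_of_mp hM1).symm)
  -- key algebraic identities
  have hY0 : entryLE 0 (N * Adag) := fun i j => (hL0 i j).trans (hLA i j)
  have h1 : Mdag * (M * Adag) = Adag := by rw [← mul_assoc, ← hF, hA2]
  have h2 : Mdag * (A * Adag) = Mdag := by rw [hE, ← mul_assoc, hM2]
  have hMN : Mdag * (N * Adag) = Adag - Mdag := by
    rw [hN, Matrix.sub_mul, Matrix.mul_sub, h1, h2]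
  have hXY : (N * Mdag) * (N * Adag) = N * Adag - N * Mdag := by
    calc (N * Mdag) * (N * Adag) = N * (Mdag * (N * Adag)) := by rw [mul_assoc]
      _ = N * (Adag - Mdag) := by rw [hMN]
      _ = N * Adag - N * Mdag := by rw [Matrix.mul_sub]
  have h1' : Adag * (M * Mdag) = Adag := by rw [← hE, ← mul_assoc, hA2]
  have h2' : Adag * (A * Mdag) = Mdag := by rw [← mul_assoc, hF, mul_assoc, ← mul_assoc, hM2]
  have hAdN : Adag * (N * Mdag) = Adag - Mdag := by
    rw [hN, Matrix.sub_mul, Matrix.mul_sub, h1', h2']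
  have hYX : (N * Adag) * (N * Mdag) = N * Adag - N * Mdag := by
    calc (N * Adag) * (N * Mdag) = N * (Adag * (N * Mdag)) := by rw [mul_assoc]
      _ = N * (Adag - Mdag) := by rw [hAdN]
      _ = N * Adag - N * Mdag := by rw [Matrix.mul_sub]
  have hInv1 : (1 - N * Mdag) * (1 + N * Adag) = 1 := by
    have hexp : (1 - N * Mdag) * (1 + N * Adag)
        = 1 + N * Adag - N * Mdag - (N * Mdag) * (N * Adag) := by noncomm_ring
    rw [hexp, hXY]; abel
  have hInv2 : (1 + N * Adag) * (1 - N * Mdag) = 1 := by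
    have hexp : (1 + N * Adag) * (1 - N * Mdag)
        = 1 + N * Adag - N * Mdag - (N * Adag) * (N * Mdag) := by noncomm_ring
    rw [hexp, hYX]; abel
  ----------------------------------------------------------------
  -- Part 1 : specRad (Mdag * N) < 1
  ----------------------------------------------------------------
  have hXP : (N * Mdag) * (1 + N * Adag) = (1 + N * Adag) - 1 := by
    have h : (1 + N * Adag) - (N * Mdag) * (1 + N * Adag) = 1 := by
      have : (1 + N * Adag) - (N * Mdag) * (1 + N * Adag)
          = (1 - N * Mdag) * (1 + N * Adag) := by noncomm_ring
      rw [this, hInv1]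
    exact eq_sub_iff_add_eq.mpr (sub_eq_iff_eq_add'.mp h).symm
  set e : Fin n → ℝ := fun _ => 1 with he
  set w1 : Fin n → ℝ := (1 + N * Adag) *ᵥ e with hw1def
  have hw1 : ∀ i, 1 ≤ w1 i := by
    intro i
    have : w1 i = e i + ((N * Adag) *ᵥ e) i := by
      rw [hw1def, Matrix.add_mulVec, Matrix.one_mulVec]
      rfl
    rw [this]
    have h0 : 0 ≤ ((N * Adag) *ᵥ e) i := mulVec_nonneg hY0 (fun _ => zero_le_one) i
    simp only [he]
    linarith
  have hw1pos : ∀ i, 0 < w1 i := fun i => lt_of_lt_of_le zero_lt_one (hw1 i)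
  have hXw1 : ∀ i, ((N * Mdag) *ᵥ w1) i = w1 i - 1 := by
    intro i
    have hq : (N * Mdag) *ᵥ w1 = ((1 + N * Adag) - 1) *ᵥ e := by
      rw [hw1def, Matrix.mulVec_mulVec, hXP]
    rw [hq, Matrix.sub_mulVec, Matrix.one_mulVec]
    rw [hw1def]
    rfl
  set Wmax : ℝ := Finset.univ.sup' Finset.univ_nonempty w1 with hWm
  have hWle : ∀ i, w1 i ≤ Wmax := fun i => Finset.le_sup' w1 (Finset.mem_univ i)
  have hW1 : 1 ≤ Wmax := le_trans (hw1 (Classical.arbitrary _)) (hWle _)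
  have hWpos : 0 < Wmax := lt_of_lt_of_le zero_lt_one hW1
  set c1 : ℝ := 1 - 1 / Wmax with hc1def
  have hc1 : 0 ≤ c1 := by
    have : 1 / Wmax ≤ 1 := by
      rw [div_le_one hWpos]; exact hW1
    simp only [hc1def]; linarith
  have hc1lt : c1 < 1 := by
    have : 0 < 1 / Wmax := by positivity
    simp only [hc1def]; linarith
  have hcw1 : ∀ i, ((N * Mdag) *ᵥ w1) i ≤ c1 * w1 i := by
    intro i
    rw [hXw1 i, hc1def]
    have hle := hWle i
    have hge := hw1 i
    have key : w1 i / Wmax ≤ 1 := by rw [div_le_one hWpos]; exact hle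
    have heq : (1 - 1 / Wmax) * w1 i = w1 i - w1 i / Wmax := by ring
    rw [heq]
    linarith
  have hspec1 : ∀ z ∈ spectrum ℂ ((Mdag * N).map Complex.ofReal), z ≠ 0 →
      z ∈ spectrum ℂ ((N * Mdag).map Complex.ofReal) := by
    intro z hz hz0
    rw [cmap_mul] at hz
    have := spec_swap hz0 hz
    rwa [← cmap_mul] at this
  have hpart1 : specRad (Mdag * N) ≤ c1 :=
    specRad_le_of_cw _ _ hspec1 hweak hw1pos hc1 hcw1
  refine ⟨lt_of_le_of_lt hpart1 hc1lt, ?_⟩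
  ----------------------------------------------------------------
  -- Part 2
  ----------------------------------------------------------------
  intro r hr
  set rY : ℝ := specRad (N * Adag) with hrYdef
  have hrY0 : 0 ≤ rY := specRad_nonneg _
  have hrY1 : 0 < 1 + rY := by linarith
  -- lower bound : rY / (1 + rY) ≤ specRad (Mdag * N)
  have hlower : rY / (1 + rY) ≤ specRad (Mdag * N) := by
    obtain ⟨μ, hμmem, hμabs⟩ := exists_specRad_attained (N * Adag)
    obtain ⟨v, hv, hev⟩ := (spec_iff_eigen _ _).mp hμmem
    have hC : (1 - (N * Mdag).map Complex.ofReal) * (1 + (N * Adag).map Complex.ofReal) = 1 := by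
      have h2c : ((1 - N * Mdag) * (1 + N * Adag)).map Complex.ofReal
          = ((1 : Matrix (Fin n) (Fin n) ℝ)).map Complex.ofReal := by rw [hInv1]
      rwa [cmap_mul, cmap_sub, cmap_add, cmap_one] at h2c
    have h3 : (1 + (N * Adag).map Complex.ofReal) *ᵥ v = (1 + μ) • v := by
      rw [Matrix.add_mulVec, Matrix.one_mulVec, hev, add_smul, one_smul]
    have h4 : (1 + μ) • ((1 - (N * Mdag).map Complex.ofReal) *ᵥ v) = v := by
      calc (1 + μ) • ((1 - (N * Mdag).map Complex.ofReal) *ᵥ v)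
          = (1 - (N * Mdag).map Complex.ofReal) *ᵥ ((1 + μ) • v) :=
            (Matrix.mulVec_smul _ _ _).symm
        _ = (1 - (N * Mdag).map Complex.ofReal) *ᵥ ((1 + (N * Adag).map Complex.ofReal) *ᵥ v) :=
            by rw [h3]
        _ = ((1 - (N * Mdag).map Complex.ofReal) * (1 + (N * Adag).map Complex.ofReal)) *ᵥ v :=
            Matrix.mulVec_mulVec _ _ _
        _ = v := by rw [hC, Matrix.one_mulVec]
    have hμ1 : (1 + μ) ≠ 0 := by
      intro h0
      rw [h0, zero_smul] at h4
      exact hv h4.symm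
    have h5 : ((N * Mdag).map Complex.ofReal) *ᵥ v = (μ / (1 + μ)) • v := by
      have h6 : (1 - (N * Mdag).map Complex.ofReal) *ᵥ v = (1 + μ)⁻¹ • v := by
        have := congrArg (fun x => (1 + μ)⁻¹ • x) h4
        simpa [smul_smul, inv_mul_cancel₀ hμ1] using this
      have h7 : ((N * Mdag).map Complex.ofReal) *ᵥ v
          = v - (1 - (N * Mdag).map Complex.ofReal) *ᵥ v := by
        rw [Matrix.sub_mulVec, Matrix.one_mulVec]; abel
      rw [h7, h6]
      have : v - (1 + μ)⁻¹ • v = (1 - (1 + μ)⁻¹) • v := by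
        rw [sub_smul, one_smul]
      rw [this]
      congr 1
      field_simp
      ring
    have hzmem : (μ / (1 + μ)) ∈ spectrum ℂ ((N * Mdag).map Complex.ofReal) :=
      (spec_iff_eigen _ _).mpr ⟨v, hv, h5⟩
    have habs : rY / (1 + rY) ≤ ‖μ / (1 + μ)‖ := by
      rw [norm_div, hμabs]
      have hub : ‖1 + μ‖ ≤ 1 + rY := by
        calc ‖1 + μ‖ ≤ ‖(1 : ℂ)‖ + ‖μ‖ := norm_add_le _ _
          _ = 1 + rY := by rw [norm_one, hμabs]
      have hpos : 0 < ‖1 + μ‖ := norm_pos_iff.mpr hμ1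
      exact div_le_div_of_nonneg_left hrY0 hpos hub
    by_cases h0 : (μ / (1 + μ)) = 0
    · rw [h0] at habs
      simp only [norm_zero] at habs
      exact le_trans habs (specRad_nonneg _)
    · have hzmem2 : (μ / (1 + μ)) ∈ spectrum ℂ ((Mdag * N).map Complex.ofReal) := by
        rw [cmap_mul] at hzmem ⊢
        exact spec_swap h0 hzmem
      exact le_trans habs (le_csSup (specRad_bddAbove _) ⟨_, hzmem2, rfl⟩)
  -- main claim : for every s > rY, r ≤ s / (1 + s)
  have hclaim : ∀ s : ℝ, rY < s → r ≤ s / (1 + s) := by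
    intro s hsY
    have hs0 : 0 < s := lt_of_le_of_lt hrY0 hsY
    have hs1 : 0 < 1 + s := by linarith
    obtain ⟨w, hwpos, hwe⟩ := resolvent_vector hY0 hsY hs0
    have htendvec : ∀ i, Tendsto
        (fun l => ((Nlam l * (Aᵀ * A + l • (1 : Matrix (Fin n) (Fin n) ℝ))⁻¹) *ᵥ w) i)
        (𝓝[>] (0:ℝ)) (𝓝 ((L *ᵥ w) i)) := by
      intro i
      have hrw : ∀ l : ℝ,
          ((Nlam l * (Aᵀ * A + l • (1 : Matrix (Fin n) (Fin n) ℝ))⁻¹) *ᵥ w) i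
          = ∑ j, (Nlam l * (Aᵀ * A + l • (1 : Matrix (Fin n) (Fin n) ℝ))⁻¹) i j * w j :=
        fun l => rfl
      have hrw2 : (L *ᵥ w) i = ∑ j, L i j * w j := rfl
      simp only [hrw, hrw2]
      apply tendsto_finset_sum
      intro j _
      exact (((continuous_id.matrix_elem i j).tendsto L).comp hLtend).mul_const (w j)
    have hLw_le : ∀ i, (L *ᵥ w) i ≤ s * w i - 1 := by
      intro i
      have hmono := mulVec_mono hLA (fun i => (hwpos i).le) i
      rw [hwe i] at hmono
      exact hmono
    have hLw0 : ∀ i, 0 ≤ (L *ᵥ w) i := mulVec_nonneg hL0 (fun i => (hwpos i).le)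
    have hev1 : ∀ᶠ l in 𝓝[>] (0:ℝ), ∀ i,
        ((Nlam l * (Aᵀ * A + l • (1 : Matrix (Fin n) (Fin n) ℝ))⁻¹) *ᵥ w) i < s * w i := by
      rw [eventually_all]
      intro i
      exact (htendvec i).eventually_lt_const (by linarith [hLw_le i])
    have hev2 : ∀ᶠ l in 𝓝[>] (0:ℝ), ∀ i,
        0 < w i + ((Nlam l * (Aᵀ * A + l • (1 : Matrix (Fin n) (Fin n) ℝ))⁻¹) *ᵥ w) i := by
      rw [eventually_all]
      intro i
      exact (tendsto_const_nhds.add (htendvec i)).eventually_const_lt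
        (by linarith [hLw0 i, hwpos i])
    have hev3 : ∀ᶠ l in 𝓝[>] (0:ℝ), 0 < l := eventually_mem_nhdsWithin
    have hevall : ∀ᶠ l in 𝓝[>] (0:ℝ), specRad ((Mlam l)⁻¹ * Nlam l) ≤ s / (1 + s) := by
      filter_upwards [hev1, hev2, hev3] with l hl1 hl2 hl
      have hBdet := StmtAux.Bdet A hl
      have hMl := hMinv l hl
      have hNl : Nlam l = Mlam l - (Aᵀ * A + l • (1 : Matrix (Fin n) (Fin n) ℝ)) := by
        rw [hBsplit l hl]; abel
      have hmid : (Mlam l)⁻¹ *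
          (Nlam l * (Aᵀ * A + l • (1 : Matrix (Fin n) (Fin n) ℝ))⁻¹)
          = (Aᵀ * A + l • (1 : Matrix (Fin n) (Fin n) ℝ))⁻¹ - (Mlam l)⁻¹ := by
        nth_rewrite 1 [hNl]
        rw [Matrix.sub_mul, Matrix.mul_sub, ← mul_assoc,
          Matrix.nonsing_inv_mul _ hMl, one_mul, ← mul_assoc, mul_assoc (Mlam l)⁻¹,
          Matrix.mul_nonsing_inv _ hBdet, mul_one]
      have hXlY : (Nlam l * (Mlam l)⁻¹) *
          (1 + Nlam l * (Aᵀ * A + l • (1 : Matrix (Fin n) (Fin n) ℝ))⁻¹)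
          = Nlam l * (Aᵀ * A + l • (1 : Matrix (Fin n) (Fin n) ℝ))⁻¹ := by
        rw [mul_add, mul_one]
        have : (Nlam l * (Mlam l)⁻¹) *
            (Nlam l * (Aᵀ * A + l • (1 : Matrix (Fin n) (Fin n) ℝ))⁻¹)
            = Nlam l * ((Mlam l)⁻¹ *
              (Nlam l * (Aᵀ * A + l • (1 : Matrix (Fin n) (Fin n) ℝ))⁻¹)) := by
          rw [mul_assoc]
        rw [this, hmid, Matrix.mul_sub]
        abel
      set w' : Fin n → ℝ :=
        w + (Nlam l * (Aᵀ * A + l • (1 : Matrix (Fin n) (Fin n) ℝ))⁻¹) *ᵥ w with hw'def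
      have hw'pos : ∀ i, 0 < w' i := hl2
      have hXlw' : (Nlam l * (Mlam l)⁻¹) *ᵥ w'
          = (Nlam l * (Aᵀ * A + l • (1 : Matrix (Fin n) (Fin n) ℝ))⁻¹) *ᵥ w := by
        have hw'2 : w' = (1 + Nlam l * (Aᵀ * A + l • (1 : Matrix (Fin n) (Fin n) ℝ))⁻¹) *ᵥ w := by
          rw [hw'def, Matrix.add_mulVec, Matrix.one_mulVec]
        rw [hw'2, Matrix.mulVec_mulVec, hXlY]
      have hcw' : ∀ i, ((Nlam l * (Mlam l)⁻¹) *ᵥ w') i ≤ (s / (1 + s)) * w' i := by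
        intro i
        rw [hXlw']
        have hy1 := hl1 i
        have hy2 := hl2 i
        have hexp : w' i
            = w i + ((Nlam l * (Aᵀ * A + l • (1 : Matrix (Fin n) (Fin n) ℝ))⁻¹) *ᵥ w) i := rfl
        rw [hexp, div_mul_eq_mul_div, le_div_iff₀ hs1]
        nlinarith
      have hspecl : ∀ z ∈ spectrum ℂ (((Mlam l)⁻¹ * Nlam l).map Complex.ofReal), z ≠ 0 →
          z ∈ spectrum ℂ ((Nlam l * (Mlam l)⁻¹).map Complex.ofReal) := by
        intro z hz hz0
        rw [cmap_mul] at hz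
        have := spec_swap hz0 hz
        rwa [← cmap_mul] at this
      exact specRad_le_of_cw _ _ hspecl (hweakl l hl) hw'pos (by positivity) hcw'
    exact le_of_tendsto hr hevall
  -- take the limit s → rY⁺
  have hfinal : r ≤ rY / (1 + rY) := by
    have hcont : Tendsto (fun s : ℝ => s / (1 + s)) (𝓝[>] rY) (𝓝 (rY / (1 + rY))) := by
      have h1 : ContinuousAt (fun s : ℝ => s / (1 + s)) rY :=
        ContinuousAt.div continuousAt_id (continuousAt_const.add continuousAt_id) (by linarith)
      exact h1.tendsto.mono_left nhdsWithin_le_nhds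
    apply ge_of_tendsto hcont
    filter_upwards [eventually_mem_nhdsWithin] with s hs
    exact hclaim s hs
  exact hfinal.trans hlower
end

section
/- Let A ∈ ℝ^{m×n} and let A = M − N be a weak proper splitting of the first type of A with A†N ≥ 0. For each λ > 0 let B_λ = M_λ − N_λ be a weak splitting of the second type of B_λ = AᵀA + λI, and suppose that, as λ → 0⁺, N_λB_λ⁻¹ converges entrywise to a matrix L with L ≥ 0 and N_λM_λ⁻¹ converges entrywise to a matrix K with K ≤ M†N. Then ρ(M†N) < 1, and for every real number r such that ρ(M_λ⁻¹N_λ) → r as λ → 0⁺, one has r ≤ ρ(M†N). -/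
open Matrix Filter Topology

namespace Aux5

variable {n : ℕ}

/-! ### Entrywise order helper lemmas -/

/-- max row sum of absolute values -/
noncomputable def rn (B : Matrix (Fin n) (Fin n) ℝ) : ℝ :=
  ((Finset.univ.sup fun i => ∑ j, ‖B i j‖₊ : NNReal) : ℝ)

lemma rn_nonneg (B : Matrix (Fin n) (Fin n) ℝ) : 0 ≤ rn B := NNReal.coe_nonneg _

lemma rn_le_sumabs (B : Matrix (Fin n) (Fin n) ℝ) : rn B ≤ ∑ i, ∑ j, |B i j| := by
  have : (Finset.univ.sup fun i => ∑ j, ‖B i j‖₊ : NNReal) ≤ ∑ i, ∑ j, ‖B i j‖₊ := by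
    refine Finset.sup_le fun i _ => ?_
    exact Finset.single_le_sum (f := fun i => ∑ j, ‖B i j‖₊)
      (fun _ _ => zero_le) (Finset.mem_univ i)
  calc rn B ≤ ((∑ i, ∑ j, ‖B i j‖₊ : NNReal) : ℝ) := by exact_mod_cast this
    _ = ∑ i, ∑ j, |B i j| := by
        push_cast [coe_nnnorm, Real.norm_eq_abs]
        rfl

lemma rn_mono {B C : Matrix (Fin n) (Fin n) ℝ} (h0 : entryLE 0 B) (h : entryLE B C) :
    rn B ≤ rn C := by
  have : (Finset.univ.sup fun i => ∑ j, ‖B i j‖₊ : NNReal) ≤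
      Finset.univ.sup fun i => ∑ j, ‖C i j‖₊ := by
    refine Finset.sup_mono_fun fun i _ => Finset.sum_le_sum fun j _ => ?_
    have h1 : (0:ℝ) ≤ B i j := h0 i j
    have h2 : B i j ≤ C i j := h i j
    simp only [← NNReal.coe_le_coe, coe_nnnorm, Real.norm_eq_abs]
    rw [abs_of_nonneg h1, abs_of_nonneg (h1.trans h2)]
    exact h2
  exact_mod_cast this

lemma entryLE_mul {B C B' C' : Matrix (Fin n) (Fin n) ℝ}
    (hB0 : entryLE 0 B) (hC0 : entryLE 0 C) (hB : entryLE B B') (hC : entryLE C C') :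
    entryLE (B * C) (B' * C') := by
  intro i j
  simp only [Matrix.mul_apply]
  exact Finset.sum_le_sum fun k _ =>
    mul_le_mul (hB i k) (hC k j) (hC0 k j) ((hB0 i k).trans (hB i k))

lemma entryLE_mul_nonneg {B C : Matrix (Fin n) (Fin n) ℝ}
    (hB : entryLE 0 B) (hC : entryLE 0 C) : entryLE 0 (B * C) := by
  intro i j
  simp only [Matrix.mul_apply, Matrix.zero_apply]
  exact Finset.sum_nonneg fun k _ => mul_nonneg (hB i k) (hC k j)

lemma entryLE_pow_nonneg {B : Matrix (Fin n) (Fin n) ℝ} (hB : entryLE 0 B) (p : ℕ) :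
    entryLE 0 (B ^ p) := by
  induction p with
  | zero => intro i j; simp [pow_zero, Matrix.one_apply]; positivity
  | succ p ih => rw [pow_succ]; exact entryLE_mul_nonneg ih hB

lemma entryLE_pow {B C : Matrix (Fin n) (Fin n) ℝ} (hB : entryLE 0 B) (h : entryLE B C)
    (p : ℕ) : entryLE (B ^ p) (C ^ p) := by
  induction p with
  | zero => intro i j; simp [pow_zero]
  | succ p ih =>
    rw [pow_succ, pow_succ]
    exact entryLE_mul (entryLE_pow_nonneg hB p) hB ih h

/-! ### Norm and spectrum lemmas -/

section NormStuff

attribute [local instance] Matrix.linftyOpNormedRing Matrix.linftyOpNormedAlgebra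

noncomputable local instance : CompleteSpace (Matrix (Fin n) (Fin n) ℂ) :=
  (inferInstance : CompleteSpace (Fin n → Fin n → ℂ))

lemma norm_map_eq_rn (B : Matrix (Fin n) (Fin n) ℝ) : ‖B.map Complex.ofReal‖ = rn B := by
  rw [Matrix.linfty_opNorm_def, rn]
  congr 1
  refine Finset.sup_congr rfl fun i _ => Finset.sum_congr rfl fun j _ => ?_
  simp [Matrix.map_apply, Complex.nnnorm_real]

lemma map_pow_ofReal (B : Matrix (Fin n) (Fin n) ℝ) (p : ℕ) :
    (B.map Complex.ofReal) ^ p = (B ^ p).map Complex.ofReal := by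
  have : B.map Complex.ofReal = Complex.ofRealHom.mapMatrix B := rfl
  rw [this, ← map_pow]
  rfl

lemma abs_rn_sub_rn_le (X Y : Matrix (Fin n) (Fin n) ℝ) :
    |rn X - rn Y| ≤ rn (X - Y) := by
  have hsub : (X - Y).map Complex.ofReal
      = X.map Complex.ofReal - Y.map Complex.ofReal := by
    have : ∀ B : Matrix (Fin n) (Fin n) ℝ, B.map Complex.ofReal
        = Complex.ofRealHom.mapMatrix B := fun _ => rfl
    rw [this, this, this, map_sub]
  rw [← norm_map_eq_rn, ← norm_map_eq_rn, ← norm_map_eq_rn, hsub]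
  exact abs_norm_sub_norm_le _ _

lemma abs_mem_le (hn : Nonempty (Fin n)) {B : Matrix (Fin n) (Fin n) ℝ} {μ : ℂ}
    (h : μ ∈ spectrum ℂ (B.map Complex.ofReal)) (p : ℕ) (hp : 0 < p) :
    ‖μ‖ ^ p ≤ rn (B ^ p) := by
  have hpow : μ ^ p ∈ spectrum ℂ ((B.map Complex.ofReal) ^ p) := by
    rw [spectrum.map_pow_of_pos _ hp]
    exact ⟨μ, h, rfl⟩
  have := spectrum.norm_le_norm_of_mem hpow
  rwa [map_pow_ofReal, norm_map_eq_rn, norm_pow] at this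

lemma specRad_bddAbove (hn : Nonempty (Fin n)) (B : Matrix (Fin n) (Fin n) ℝ) :
    BddAbove ((fun z : ℂ => ‖z‖) '' spectrum ℂ (B.map Complex.ofReal)) := by
  refine ⟨rn B, ?_⟩
  rintro x ⟨μ, hμ, rfl⟩
  have := spectrum.norm_le_norm_of_mem hμ
  rwa [norm_map_eq_rn] at this

lemma specRad_le_rn_pow (hn : Nonempty (Fin n)) (B : Matrix (Fin n) (Fin n) ℝ)
    (p : ℕ) (hp : 0 < p) : specRad B ≤ rn (B ^ p) ^ ((1:ℝ) / p) := by
  have hc : (0:ℝ) ≤ rn (B ^ p) ^ ((1:ℝ) / p) :=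
    Real.rpow_nonneg (NNReal.coe_nonneg _) _
  refine Real.sSup_le ?_ hc
  rintro x ⟨μ, hμ, rfl⟩
  have h1 : ‖μ‖ ^ p ≤ rn (B ^ p) := abs_mem_le hn hμ p hp
  have h2 : ((‖μ‖ ^ p : ℝ)) ^ ((1:ℝ)/p) ≤ rn (B ^ p) ^ ((1:ℝ)/p) :=
    Real.rpow_le_rpow (by positivity) h1 (by positivity)
  calc ‖μ‖ = (‖μ‖ ^ p) ^ ((1:ℝ)/p) := by
        rw [← Real.rpow_natCast (‖μ‖) p, ← Real.rpow_mul (by positivity),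
          mul_one_div_cancel (by exact_mod_cast hp.ne'), Real.rpow_one]
    _ ≤ _ := h2

lemma specRad_nonneg (hn : Nonempty (Fin n)) (B : Matrix (Fin n) (Fin n) ℝ) :
    0 ≤ specRad B := by
  obtain ⟨μ, hμ⟩ := spectrum.nonempty_of_isAlgClosed_of_finiteDimensional ℂ
    (B.map Complex.ofReal)
  exact (norm_nonneg μ).trans
    (le_csSup (specRad_bddAbove hn B) ⟨μ, hμ, rfl⟩)

lemma spectralRadius_toReal_le (hn : Nonempty (Fin n)) (B : Matrix (Fin n) (Fin n) ℝ) :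
    (spectralRadius ℂ (B.map Complex.ofReal)).toReal ≤ specRad B := by
  have hne : spectralRadius ℂ (B.map Complex.ofReal) ≤ ENNReal.ofReal (specRad B) := by
    rw [spectralRadius]
    refine iSup₂_le fun μ hμ => ?_
    have h1 : ‖μ‖ ≤ specRad B :=
      le_csSup (specRad_bddAbove hn B) ⟨μ, hμ, rfl⟩
    calc (‖μ‖₊ : ENNReal) = ENNReal.ofReal (‖μ‖) := by
          rw [ofReal_norm, enorm_eq_nnnorm]
      _ ≤ ENNReal.ofReal (specRad B) := ENNReal.ofReal_le_ofReal h1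
  calc (spectralRadius ℂ (B.map Complex.ofReal)).toReal
      ≤ (ENNReal.ofReal (specRad B)).toReal := ENNReal.toReal_mono ENNReal.ofReal_ne_top hne
    _ = specRad B := ENNReal.toReal_ofReal (specRad_nonneg hn B)

lemma spectralRadius_ne_top (hn : Nonempty (Fin n)) (B : Matrix (Fin n) (Fin n) ℝ) :
    spectralRadius ℂ (B.map Complex.ofReal) ≠ ⊤ := by
  haveI := hn
  exact ((spectrum.spectralRadius_le_nnnorm (B.map Complex.ofReal)).trans_lt
    ENNReal.coe_lt_top).ne

lemma gelfand (B : Matrix (Fin n) (Fin n) ℝ) :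
    Tendsto (fun p : ℕ => ENNReal.ofReal (rn (B ^ p) ^ (1 / p : ℝ))) atTop
      (𝓝 (spectralRadius ℂ (B.map Complex.ofReal))) := by
  have := spectrum.pow_norm_pow_one_div_tendsto_nhds_spectralRadius (B.map Complex.ofReal)
  convert this using 2 with p
  rw [map_pow_ofReal, norm_map_eq_rn]

end NormStuff

/-! ### `rn` is continuous with respect to entrywise convergence -/

lemma rn_tendsto {α : Type*} {F : Filter α} {f : α → Matrix (Fin n) (Fin n) ℝ}
    {C : Matrix (Fin n) (Fin n) ℝ} (h : Tendsto f F (𝓝 C)) :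
    Tendsto (fun x => rn (f x)) F (𝓝 (rn C)) := by
  have hent : ∀ i j, Tendsto (fun x => f x i j) F (𝓝 (C i j)) := by
    intro i j
    have h1 := (tendsto_pi_nhds.1 h) i
    exact (tendsto_pi_nhds.1 h1) j
  have hsum : Tendsto (fun x => ∑ i, ∑ j, |f x i j - C i j|) F (𝓝 0) := by
    have : Tendsto (fun x => ∑ i, ∑ j, |f x i j - C i j|) F
        (𝓝 (∑ i : Fin n, ∑ j : Fin n, |C i j - C i j|)) := by
      refine tendsto_finset_sum _ fun i _ => tendsto_finset_sum _ fun j _ => ?_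
      exact ((hent i j).sub_const (C i j)).abs
    simpa using this
  rw [tendsto_iff_dist_tendsto_zero]
  refine squeeze_zero (fun x => dist_nonneg) (fun x => ?_) hsum
  rw [Real.dist_eq]
  calc |rn (f x) - rn C| ≤ rn (f x - C) := abs_rn_sub_rn_le _ _
    _ ≤ ∑ i, ∑ j, |(f x - C) i j| := rn_le_sumabs _
    _ = ∑ i, ∑ j, |f x i j - C i j| := by simp [Matrix.sub_apply]

/-! ### Degenerate case and similarity invariance -/

lemma spectrum_empty_of_subsingleton (hn : ¬ Nonempty (Fin n))
    (B : Matrix (Fin n) (Fin n) ℂ) : spectrum ℂ B = ∅ := by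
  have : Subsingleton (Matrix (Fin n) (Fin n) ℂ) := by
    constructor
    intro a b
    ext i j
    exact absurd ⟨i⟩ hn
  ext z
  simp only [Set.mem_empty_iff_false, iff_false, spectrum.mem_iff]
  exact fun h => h (isUnit_of_subsingleton _)

lemma specRad_zero_of_subsingleton (hn : ¬ Nonempty (Fin n))
    (B : Matrix (Fin n) (Fin n) ℝ) : specRad B = 0 := by
  rw [specRad, spectrum_empty_of_subsingleton hn, Set.image_empty, Real.sSup_empty]

/-- similar matrices: `specRad (M⁻¹ * N) = specRad (N * M⁻¹)` when `M` is invertible -/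
lemma specRad_inv_mul (M N : Matrix (Fin n) (Fin n) ℝ) (h : IsUnit M.det) :
    specRad (M⁻¹ * N) = specRad (N * M⁻¹) := by
  have h1 : M * M⁻¹ = 1 := Matrix.mul_nonsing_inv M h
  have h2 : M⁻¹ * M = 1 := Matrix.nonsing_inv_mul M h
  set φ : Matrix (Fin n) (Fin n) ℝ →+* Matrix (Fin n) (Fin n) ℂ :=
    Complex.ofRealHom.mapMatrix with hφ
  have hmap : ∀ B : Matrix (Fin n) (Fin n) ℝ, B.map Complex.ofReal = φ B := fun _ => rfl
  have u1 : φ M * φ M⁻¹ = 1 := by rw [← _root_.map_mul, h1, _root_.map_one]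
  have u2 : φ M⁻¹ * φ M = 1 := by rw [← _root_.map_mul, h2, _root_.map_one]
  set u : (Matrix (Fin n) (Fin n) ℂ)ˣ := ⟨φ M, φ M⁻¹, u1, u2⟩ with hu
  have key : spectrum ℂ (φ (M⁻¹ * N)) = spectrum ℂ (φ (N * M⁻¹)) := by
    have : φ (M⁻¹ * N) = (↑u⁻¹ : Matrix (Fin n) (Fin n) ℂ) * (φ (N * M⁻¹)) *
        (↑u : Matrix (Fin n) (Fin n) ℂ) := by
      simp only [_root_.map_mul]
      show φ M⁻¹ * φ N = φ M⁻¹ * (φ N * φ M⁻¹) * φ M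
      rw [Matrix.mul_assoc, Matrix.mul_assoc, u2, Matrix.mul_one]
    rw [this, spectrum.units_conjugate']
  rw [specRad, specRad, hmap, hmap, key]

/-! ### Moore–Penrose algebra for proper splittings -/

variable {m : ℕ}

lemma ext_mulVec {a b : ℕ} {P Q : Matrix (Fin a) (Fin b) ℝ}
    (h : ∀ x, P.mulVec x = Q.mulVec x) : P = Q := by
  ext i j
  have := congrFun (h (Pi.single j 1)) i
  simpa [Matrix.mulVec_single] using this

variable (A M : Matrix (Fin m) (Fin n) ℝ) (Adag Mdag : Matrix (Fin n) (Fin m) ℝ)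

lemma proj_range_eq (hAdag : IsMoorePenrose A Adag) (hMdag : IsMoorePenrose M Mdag)
    (hrange : LinearMap.range M.mulVecLin = LinearMap.range A.mulVecLin) :
    M * Mdag = A * Adag := by
  obtain ⟨hA1, hA2, hA3, hA4⟩ := hAdag
  obtain ⟨hM1, hM2, hM3, hM4⟩ := hMdag
  have hQP : M * Mdag * (A * Adag) = A * Adag := by
    apply ext_mulVec
    intro x
    have hmem : (A * Adag).mulVec x ∈ LinearMap.range A.mulVecLin := by
      rw [← Matrix.mulVec_mulVec]
      exact ⟨Adag.mulVec x, rfl⟩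
    rw [← hrange] at hmem
    obtain ⟨y, hy⟩ := hmem
    simp only [Matrix.mulVecLin_apply] at hy
    calc (M * Mdag * (A * Adag)) *ᵥ x
        = (M * Mdag) *ᵥ ((A * Adag) *ᵥ x) := (Matrix.mulVec_mulVec x _ _).symm
      _ = (M * Mdag) *ᵥ (M *ᵥ y) := by rw [hy]
      _ = (M * Mdag * M) *ᵥ y := Matrix.mulVec_mulVec y _ _
      _ = M *ᵥ y := by rw [hM1]
      _ = (A * Adag) *ᵥ x := hy
  have hPQ : A * Adag * (M * Mdag) = M * Mdag := by
    apply ext_mulVec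
    intro x
    have hmem : (M * Mdag).mulVec x ∈ LinearMap.range M.mulVecLin := by
      rw [← Matrix.mulVec_mulVec]
      exact ⟨Mdag.mulVec x, rfl⟩
    rw [hrange] at hmem
    obtain ⟨y, hy⟩ := hmem
    simp only [Matrix.mulVecLin_apply] at hy
    calc (A * Adag * (M * Mdag)) *ᵥ x
        = (A * Adag) *ᵥ ((M * Mdag) *ᵥ x) := (Matrix.mulVec_mulVec x _ _).symm
      _ = (A * Adag) *ᵥ (A *ᵥ y) := by rw [hy]
      _ = (A * Adag * A) *ᵥ y := Matrix.mulVec_mulVec y _ _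
      _ = A *ᵥ y := by rw [hA1]
      _ = (M * Mdag) *ᵥ x := hy
  calc M * Mdag = A * Adag * (M * Mdag) := hPQ.symm
    _ = (A * Adag)ᵀ * (M * Mdag)ᵀ := by rw [hA3, hM3]
    _ = (M * Mdag * (A * Adag))ᵀ := (Matrix.transpose_mul _ _).symm
    _ = (A * Adag)ᵀ := by rw [hQP]
    _ = A * Adag := hA3

lemma proj_ker_eq (hAdag : IsMoorePenrose A Adag) (hMdag : IsMoorePenrose M Mdag)
    (hker : LinearMap.ker M.mulVecLin = LinearMap.ker A.mulVecLin) :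
    Mdag * M = Adag * A := by
  obtain ⟨hA1, hA2, hA3, hA4⟩ := hAdag
  obtain ⟨hM1, hM2, hM3, hM4⟩ := hMdag
  have hPQ : Adag * A * (Mdag * M) = Adag * A := by
    have h0 : ∀ x, (Adag * A).mulVec (x - (Mdag * M).mulVec x) = 0 := by
      intro x
      have hmem : (x - (Mdag * M).mulVec x) ∈ LinearMap.ker M.mulVecLin := by
        simp only [LinearMap.mem_ker, Matrix.mulVecLin_apply]
        rw [Matrix.mulVec_sub, Matrix.mulVec_mulVec, ← Matrix.mul_assoc, hM1, sub_self]
      rw [hker] at hmem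
      simp only [LinearMap.mem_ker, Matrix.mulVecLin_apply] at hmem
      calc (Adag * A) *ᵥ (x - (Mdag * M) *ᵥ x)
          = Adag *ᵥ (A *ᵥ (x - (Mdag * M) *ᵥ x)) := (Matrix.mulVec_mulVec _ _ _).symm
        _ = Adag *ᵥ 0 := by rw [hmem]
        _ = 0 := Matrix.mulVec_zero _
    apply ext_mulVec
    intro x
    have := h0 x
    rw [Matrix.mulVec_sub, sub_eq_zero] at this
    rw [← Matrix.mulVec_mulVec, ← this]
  have hQP : Mdag * M * (Adag * A) = Mdag * M := by
    have h0 : ∀ x, (Mdag * M).mulVec (x - (Adag * A).mulVec x) = 0 := by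
      intro x
      have hmem : (x - (Adag * A).mulVec x) ∈ LinearMap.ker A.mulVecLin := by
        simp only [LinearMap.mem_ker, Matrix.mulVecLin_apply]
        rw [Matrix.mulVec_sub, Matrix.mulVec_mulVec, ← Matrix.mul_assoc, hA1, sub_self]
      rw [← hker] at hmem
      simp only [LinearMap.mem_ker, Matrix.mulVecLin_apply] at hmem
      calc (Mdag * M) *ᵥ (x - (Adag * A) *ᵥ x)
          = Mdag *ᵥ (M *ᵥ (x - (Adag * A) *ᵥ x)) := (Matrix.mulVec_mulVec _ _ _).symm
        _ = Mdag *ᵥ 0 := by rw [hmem]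
        _ = 0 := Matrix.mulVec_zero _
    apply ext_mulVec
    intro x
    have := h0 x
    rw [Matrix.mulVec_sub, sub_eq_zero] at this
    rw [← Matrix.mulVec_mulVec, ← this]
  calc Mdag * M = Mdag * M * (Adag * A) := hQP.symm
    _ = (Mdag * M)ᵀ * (Adag * A)ᵀ := by rw [hA4, hM4]
    _ = (Adag * A * (Mdag * M))ᵀ := (Matrix.transpose_mul _ _).symm
    _ = (Adag * A)ᵀ := by rw [hPQ]
    _ = Adag * A := hA4

/-- The key algebraic identity `A†N = M†N + M†N·A†N` for a proper splitting `A = M - N`. -/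
lemma key_identity (N : Matrix (Fin m) (Fin n) ℝ)
    (hAdag : IsMoorePenrose A Adag) (hMdag : IsMoorePenrose M Mdag)
    (hsplit : A = M - N)
    (hrange : LinearMap.range M.mulVecLin = LinearMap.range A.mulVecLin)
    (hker : LinearMap.ker M.mulVecLin = LinearMap.ker A.mulVecLin) :
    Adag * N = Mdag * N + Mdag * N * (Adag * N) := by
  have hF := proj_range_eq A M Adag Mdag hAdag hMdag hrange
  have hE := proj_ker_eq A M Adag Mdag hAdag hMdag hker
  obtain ⟨hA1, hA2, hA3, hA4⟩ := hAdag
  obtain ⟨hM1, hM2, hM3, hM4⟩ := hMdag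
  have hN : N = M - A := by rw [hsplit]; abel
  rw [hN]
  have e1 : Mdag * M * (Adag * M) = Adag * M := by
    calc Mdag * M * (Adag * M) = Adag * A * (Adag * M) := by rw [hE]
      _ = Adag * A * Adag * M := (Matrix.mul_assoc (Adag * A) Adag M).symm
      _ = Adag * M := by rw [hA2]
  have e2 : Mdag * M * (Adag * A) = Adag * A := by
    calc Mdag * M * (Adag * A) = Adag * A * (Adag * A) := by rw [hE]
      _ = Adag * A * Adag * A := (Matrix.mul_assoc (Adag * A) Adag A).symm
      _ = Adag * A := by rw [hA2]
  have e3 : Mdag * A * (Adag * A) = Mdag * A := by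
    calc Mdag * A * (Adag * A) = Mdag * (A * (Adag * A)) := Matrix.mul_assoc Mdag A (Adag * A)
      _ = Mdag * (A * Adag * A) := by rw [Matrix.mul_assoc A Adag A]
      _ = Mdag * A := by rw [hA1]
  have e4 : Mdag * A * (Adag * M) = Adag * A := by
    calc Mdag * A * (Adag * M) = Mdag * (A * (Adag * M)) := Matrix.mul_assoc Mdag A (Adag * M)
      _ = Mdag * (A * Adag * M) := by rw [Matrix.mul_assoc A Adag M]
      _ = Mdag * (M * Mdag * M) := by rw [hF]
      _ = Mdag * M := by rw [hM1]
      _ = Adag * A := hE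
  simp only [Matrix.mul_sub, Matrix.sub_mul]
  rw [e1, e2, e3, e4, hE]
  abel

end Aux5

theorem stmt5 {m n : ℕ} (A M N : Matrix (Fin m) (Fin n) ℝ)
    (Adag Mdag : Matrix (Fin n) (Fin m) ℝ)
    (hAdag : IsMoorePenrose A Adag) (hMdag : IsMoorePenrose M Mdag)
    -- `A = M − N` is a weak proper splitting of the first type with `A†N ≥ 0`
    (hsplit : A = M - N)
    (hrange : LinearMap.range M.mulVecLin = LinearMap.range A.mulVecLin)
    (hker : LinearMap.ker M.mulVecLin = LinearMap.ker A.mulVecLin)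
    (hweak : entryLE 0 (Mdag * N))
    (hAN : entryLE 0 (Adag * N))
    -- for each `λ > 0`, `B_λ = M_λ − N_λ` is a weak splitting of the second type
    (Mlam Nlam : ℝ → Matrix (Fin n) (Fin n) ℝ)
    (hBsplit : ∀ l : ℝ, 0 < l →
      Aᵀ * A + l • (1 : Matrix (Fin n) (Fin n) ℝ) = Mlam l - Nlam l)
    (hMinv : ∀ l : ℝ, 0 < l → IsUnit (Mlam l).det)
    (hweakl : ∀ l : ℝ, 0 < l → entryLE 0 (Nlam l * (Mlam l)⁻¹))
    -- `N_λ B_λ⁻¹ → L ≥ 0` entrywise as `λ → 0⁺`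
    (L : Matrix (Fin n) (Fin n) ℝ)
    (hLtend : Tendsto
      (fun l : ℝ => Nlam l * (Aᵀ * A + l • (1 : Matrix (Fin n) (Fin n) ℝ))⁻¹)
      (𝓝[>] 0) (𝓝 L))
    (hL0 : entryLE 0 L)
    -- `N_λ M_λ⁻¹ → K ≤ M†N` entrywise as `λ → 0⁺`
    (K : Matrix (Fin n) (Fin n) ℝ)
    (hKtend : Tendsto (fun l : ℝ => Nlam l * (Mlam l)⁻¹) (𝓝[>] 0) (𝓝 K))
    (hK : entryLE K (Mdag * N)) :
    specRad (Mdag * N) < 1 ∧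
      ∀ r : ℝ, Tendsto (fun l : ℝ => specRad ((Mlam l)⁻¹ * Nlam l)) (𝓝[>] 0) (𝓝 r) →
        r ≤ specRad (Mdag * N) := by
  by_cases hn : Nonempty (Fin n)
  · -- main case
    set T := Mdag * N with hT
    set S := Adag * N with hS
    have hkey : S = T + T * S :=
      Aux5.key_identity A M Adag Mdag N hAdag hMdag hsplit hrange hker
    clear_value T S
    -- partial sums identity
    have hsum : ∀ k : ℕ, S = (∑ j ∈ Finset.range k, T ^ (j + 1)) + T ^ k * S := by
      intro k
      induction k with
      | zero => simp
      | succ k ih =>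
        calc S = (∑ j ∈ Finset.range k, T ^ (j + 1)) + T ^ k * S := ih
          _ = (∑ j ∈ Finset.range k, T ^ (j + 1)) + T ^ k * (T + T * S) := by rw [← hkey]
          _ = (∑ j ∈ Finset.range (k + 1), T ^ (j + 1)) + T ^ (k + 1) * S := by
              rw [Finset.sum_range_succ, Matrix.mul_add, ← Matrix.mul_assoc, ← pow_succ,
                add_assoc]
    -- entries of T^k tend to zero
    have hTpow0 : ∀ i j, Tendsto (fun k : ℕ => (T ^ (k + 1)) i j) atTop (𝓝 0) := by
      intro i j
      have hnonneg : ∀ k : ℕ, 0 ≤ (T ^ (k + 1)) i j := fun k =>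
        Aux5.entryLE_pow_nonneg hweak (k + 1) i j
      have hbdd : ∀ k : ℕ, ∑ q ∈ Finset.range k, (T ^ (q + 1)) i j ≤ S i j := by
        intro k
        have h1 := hsum k
        have h2 : S i j = (∑ q ∈ Finset.range k, T ^ (q + 1)) i j + (T ^ k * S) i j := by
          rw [← Matrix.add_apply, ← h1]
        have h3 : (0:ℝ) ≤ (T ^ k * S) i j :=
          Aux5.entryLE_mul_nonneg (Aux5.entryLE_pow_nonneg hweak k) hAN i j
        have h4 : (∑ q ∈ Finset.range k, T ^ (q + 1)) i j
            = ∑ q ∈ Finset.range k, (T ^ (q + 1)) i j := by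
          simp [Matrix.sum_apply]
        linarith [h2, h3, h4.symm.le]
      exact (summable_of_sum_range_le hnonneg hbdd).tendsto_atTop_zero
    -- rn of powers tends to zero
    have hrn0 : Tendsto (fun k : ℕ => Aux5.rn (T ^ (k + 1))) atTop (𝓝 0) := by
      have hsumabs : Tendsto (fun k : ℕ => ∑ i, ∑ j, |(T ^ (k + 1)) i j|) atTop (𝓝 0) := by
        have : Tendsto (fun k : ℕ => ∑ i : Fin n, ∑ j : Fin n, |(T ^ (k + 1)) i j|) atTop
            (𝓝 (∑ i : Fin n, ∑ j : Fin n, |(0:ℝ)|)) :=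
          tendsto_finset_sum _ fun i _ => tendsto_finset_sum _ fun j _ => (hTpow0 i j).abs
        simpa using this
      exact squeeze_zero (fun k => Aux5.rn_nonneg _) (fun k => Aux5.rn_le_sumabs _) hsumabs
    obtain ⟨k, hk⟩ : ∃ k : ℕ, Aux5.rn (T ^ (k + 1)) < 1 :=
      (hrn0.eventually_lt_const one_pos).exists
    have hlt1 : specRad T < 1 := by
      have h1 := Aux5.specRad_le_rn_pow hn T (k + 1) (Nat.succ_pos k)
      refine lt_of_le_of_lt h1 ?_
      rcases eq_or_lt_of_le (Aux5.rn_nonneg (T ^ (k + 1))) with h0 | h0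
      · rw [← h0, Real.zero_rpow (by positivity)]; norm_num
      · exact Real.rpow_lt_one (Aux5.rn_nonneg _) hk (by positivity)
    refine ⟨hlt1, ?_⟩
    intro r hr
    -- K is entrywise nonnegative
    have hK0 : entryLE 0 K := by
      intro i j
      have hent : Tendsto (fun l => (Nlam l * (Mlam l)⁻¹) i j) (𝓝[>] (0:ℝ)) (𝓝 (K i j)) := by
        have h1 := (tendsto_pi_nhds.1 hKtend) i
        exact (tendsto_pi_nhds.1 h1) j
      refine ge_of_tendsto hent ?_
      filter_upwards [eventually_mem_nhdsWithin] with l hl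
      exact hweakl l hl i j
    -- for each positive power p, r ≤ rn (T^p) ^ (1/p)
    have hrc : ∀ p : ℕ, 0 < p → r ≤ Aux5.rn (T ^ p) ^ ((1:ℝ) / p) := by
      intro p hp
      have hpowtend : Tendsto (fun l => (Nlam l * (Mlam l)⁻¹) ^ p) (𝓝[>] (0:ℝ)) (𝓝 (K ^ p)) :=
        ((continuous_pow p).tendsto K).comp hKtend
      have h2 : Tendsto (fun l => Aux5.rn ((Nlam l * (Mlam l)⁻¹) ^ p) ^ ((1:ℝ) / p))
          (𝓝[>] (0:ℝ)) (𝓝 (Aux5.rn (K ^ p) ^ ((1:ℝ) / p))) :=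
        (Aux5.rn_tendsto hpowtend).rpow_const (Or.inr (by positivity))
      have h1 : ∀ᶠ l in 𝓝[>] (0:ℝ), specRad ((Mlam l)⁻¹ * Nlam l) ≤
          Aux5.rn ((Nlam l * (Mlam l)⁻¹) ^ p) ^ ((1:ℝ) / p) := by
        filter_upwards [eventually_mem_nhdsWithin] with l hl
        rw [Aux5.specRad_inv_mul _ _ (hMinv l hl)]
        exact Aux5.specRad_le_rn_pow hn _ p hp
      have hrK : r ≤ Aux5.rn (K ^ p) ^ ((1:ℝ) / p) :=
        le_of_tendsto_of_tendsto hr h2 h1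
      refine hrK.trans (Real.rpow_le_rpow (Aux5.rn_nonneg _) ?_ (by positivity))
      exact Aux5.rn_mono (Aux5.entryLE_pow_nonneg hK0 p) (Aux5.entryLE_pow hK0 hK p)
    -- Gelfand's formula
    have hg := Aux5.gelfand T
    have hle : ENNReal.ofReal r ≤ spectralRadius ℂ (T.map Complex.ofReal) := by
      refine ge_of_tendsto hg ?_
      filter_upwards [eventually_ge_atTop 1] with p hp
      exact ENNReal.ofReal_le_ofReal (hrc p hp)
    rcases le_or_gt r 0 with hr0 | hr0
    · exact hr0.trans (Aux5.specRad_nonneg hn T)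
    · calc r = (ENNReal.ofReal r).toReal := (ENNReal.toReal_ofReal hr0.le).symm
        _ ≤ (spectralRadius ℂ (T.map Complex.ofReal)).toReal :=
            ENNReal.toReal_mono (Aux5.spectralRadius_ne_top hn T) hle
        _ ≤ specRad T := Aux5.spectralRadius_toReal_le hn T
  · -- degenerate case n = 0
    have hz : ∀ B : Matrix (Fin n) (Fin n) ℝ, specRad B = 0 :=
      Aux5.specRad_zero_of_subsingleton hn
    refine ⟨by rw [hz]; norm_num, ?_⟩
    intro r hr
    have : (fun l : ℝ => specRad ((Mlam l)⁻¹ * Nlam l)) = fun _ => (0:ℝ) :=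
      funext fun l => hz _
    rw [this] at hr
    have hr0 : r = 0 := tendsto_nhds_unique hr tendsto_const_nhds
    rw [hr0, hz]
end

section
/- Let A = P − R + S be a double weak splitting of type II of a symmetric nonsingular matrix A ∈ ℝ^{n×n}, with iteration matrix W̃ = [[(RP⁻¹)ᵀ, −(SP⁻¹)ᵀ],[I, 0]]. Then ρ(W̃) < 1 if and only if ρ((R − S)P⁻¹) < 1. -/
open Matrix Filter Topology ENNReal
open scoped NNReal
set_option linter.unusedSectionVars false
set_option maxHeartbeats 1000000

attribute [local instance] Matrix.linftyOpNormedRing Matrix.linftyOpNormedAlgebra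

/-- Iteration matrix of a double weak splitting of type II:
`W̃ = [[(RP⁻¹)ᵀ, −(SP⁻¹)ᵀ],[I, 0]]`. -/
noncomputable def itMatII {n : Type*} [Fintype n] [DecidableEq n]
    (P R S : Matrix n n ℝ) : Matrix (n ⊕ n) (n ⊕ n) ℝ :=
  Matrix.fromBlocks ((R * P⁻¹)ᵀ) (-((S * P⁻¹)ᵀ)) 1 0

/-- Iteration matrix of a double weak splitting of type I:
`Ŵ = [[P⁻¹R, −P⁻¹S],[I, 0]]`. -/
noncomputable def itMatI {n : Type*} [Fintype n] [DecidableEq n]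
    (P R S : Matrix n n ℝ) : Matrix (n ⊕ n) (n ⊕ n) ℝ :=
  Matrix.fromBlocks (P⁻¹ * R) (-(P⁻¹ * S)) 1 0



attribute [local instance] Matrix.linftyOpNormedRing Matrix.linftyOpNormedAlgebra

section gelfand
variable {A : Type*} [NormedRing A] [NormedAlgebra ℂ A] [CompleteSpace A]

lemma gelfand_iff (a : A) :
    spectralRadius ℂ a < 1 ↔ ∃ r : ℝ≥0, r < 1 ∧ ∀ᶠ k in atTop, ‖a ^ k‖₊ ≤ r ^ k := by
  constructor
  · intro h
    obtain ⟨r, hr1, hr2⟩ := ENNReal.lt_iff_exists_nnreal_btwn.mp h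
    refine ⟨r, by exact_mod_cast hr2, ?_⟩
    have h2 := (spectrum.pow_nnnorm_pow_one_div_tendsto_nhds_spectralRadius a).eventually_lt_const hr1
    filter_upwards [h2, eventually_ge_atTop 1] with k hk hk1
    have hk0 : (k : ℝ) ≠ 0 := by positivity
    have h3 := ENNReal.rpow_le_rpow hk.le (by positivity : (0:ℝ) ≤ (k:ℝ))
    rw [← ENNReal.rpow_mul, one_div, inv_mul_cancel₀ hk0, ENNReal.rpow_one,
      ENNReal.rpow_natCast] at h3
    exact_mod_cast h3
  · rintro ⟨r, hr, hev⟩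
    have hle : spectralRadius ℂ a ≤ r := by
      refine le_of_tendsto (spectrum.pow_nnnorm_pow_one_div_tendsto_nhds_spectralRadius a) ?_
      filter_upwards [hev, eventually_ge_atTop 1] with k hk hk1
      have hk0 : (k : ℝ) ≠ 0 := by positivity
      calc (‖a ^ k‖₊ : ℝ≥0∞) ^ (1 / (k:ℝ)) ≤ ((r:ℝ≥0∞) ^ k) ^ (1 / (k:ℝ)) := by
            apply ENNReal.rpow_le_rpow _ (by positivity)
            exact_mod_cast hk
        _ = r := by
            rw [← ENNReal.rpow_natCast _ k, ← ENNReal.rpow_mul, mul_one_div,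
              div_self hk0, ENNReal.rpow_one]
    exact hle.trans_lt (by exact_mod_cast hr)

end gelfand

section mat
variable {m : Type*} [Fintype m] [DecidableEq m]

local instance matCS {m' : Type*} [Fintype m'] [DecidableEq m'] :
    CompleteSpace (Matrix m' m' ℂ) := FiniteDimensional.complete ℂ _

lemma specRad_lt_one_iff (B : Matrix m m ℝ) :
    specRad B < 1 ↔ spectralRadius ℂ (B.map Complex.ofReal) < 1 := by
  set M := B.map Complex.ofReal with hM
  constructor
  · intro h
    by_cases hs : (spectrum ℂ M).Nonempty
    · refine (spectrum.spectralRadius_lt_of_forall_lt_of_nonempty hs (r := 1) ?_).trans_le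
        (by norm_num)
      intro z hz
      have hb : BddAbove ((fun z : ℂ => ‖z‖) '' spectrum ℂ M) :=
        ((spectrum.isCompact M).image continuous_norm).bddAbove
      have h1 : ‖z‖ ≤ specRad B :=
        le_csSup hb ⟨z, hz, rfl⟩
      have h2 : ‖z‖ < 1 := h1.trans_lt h
      exact_mod_cast h2
    · rw [Set.not_nonempty_iff_eq_empty] at hs
      simp [spectralRadius, hs]
  · intro h
    have hne : spectralRadius ℂ M ≠ ⊤ := h.ne_top
    have h1 : ∀ x ∈ (fun z : ℂ => ‖z‖) '' spectrum ℂ M, x ≤ (spectralRadius ℂ M).toReal := by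
      rintro x ⟨z, hz, rfl⟩
      have h2 : (‖z‖₊ : ℝ≥0∞) ≤ spectralRadius ℂ M := le_iSup₂ (f := fun k _ => (‖k‖₊ : ℝ≥0∞)) z hz
      have h3 := ENNReal.toReal_mono hne h2
      simpa using h3
    have h4 : (spectralRadius ℂ M).toReal < 1 := by
      rw [← ENNReal.toReal_one]
      exact ENNReal.toReal_strict_mono (by simp) h
    exact lt_of_le_of_lt (Real.sSup_le h1 ENNReal.toReal_nonneg) h4

lemma nnnorm_map_ofReal (B : Matrix m m ℝ) :
    ‖B.map Complex.ofReal‖₊ = ‖B‖₊ := by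
  rw [Matrix.linfty_opNNNorm_def, Matrix.linfty_opNNNorm_def]
  simp [Matrix.map_apply]

lemma specRad_lt_one_iff_pow (B : Matrix m m ℝ) :
    specRad B < 1 ↔ ∃ r : ℝ≥0, r < 1 ∧ ∀ᶠ k in atTop, ‖B ^ k‖₊ ≤ r ^ k := by
  rw [specRad_lt_one_iff, gelfand_iff]
  have hmap : ∀ k : ℕ, (B.map Complex.ofReal) ^ k = (B ^ k).map Complex.ofReal := by
    intro k
    have := map_pow (RingHom.mapMatrix (m := m) Complex.ofRealHom) B k
    have h := this.symm
    simp only [RingHom.mapMatrix_apply] at h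
    exact h
  constructor
  · rintro ⟨r, hr, hev⟩
    refine ⟨r, hr, ?_⟩
    filter_upwards [hev] with k hk
    rwa [hmap k, nnnorm_map_ofReal] at hk
  · rintro ⟨r, hr, hev⟩
    refine ⟨r, hr, ?_⟩
    filter_upwards [hev] with k hk
    rwa [hmap k, nnnorm_map_ofReal]

end mat

section mat2
variable {m : Type*} [Fintype m] [DecidableEq m]

lemma spectrum_transpose (M : Matrix m m ℂ) : spectrum ℂ Mᵀ = spectrum ℂ M := by
  ext z
  have key : ∀ N : Matrix m m ℂ, IsUnit Nᵀ ↔ IsUnit N := fun N => by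
    rw [Matrix.isUnit_iff_isUnit_det, Matrix.isUnit_iff_isUnit_det, Matrix.det_transpose]
  simp only [spectrum.mem_iff]
  have : algebraMap ℂ (Matrix m m ℂ) z - Mᵀ = (algebraMap ℂ (Matrix m m ℂ) z - M)ᵀ := by
    rw [Matrix.transpose_sub]
    congr 1
    rw [Matrix.algebraMap_eq_diagonal, Matrix.diagonal_transpose]
  rw [this, key]

lemma specRad_transpose (B : Matrix m m ℝ) : specRad Bᵀ = specRad B := by
  unfold specRad
  rw [Matrix.transpose_map, spectrum_transpose]

lemma row_sum_le_nnnorm (B : Matrix m m ℝ) (i : m) : ∑ j, ‖B i j‖₊ ≤ ‖B‖₊ := by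
  rw [Matrix.linfty_opNNNorm_def]
  exact Finset.le_sup (f := fun i => ∑ j, ‖B i j‖₊) (Finset.mem_univ i)

lemma nnnorm_le_of_abs_le {B C : Matrix m m ℝ} (h : ∀ i j, |B i j| ≤ C i j) :
    ‖B‖₊ ≤ ‖C‖₊ := by
  rw [Matrix.linfty_opNNNorm_def, Matrix.linfty_opNNNorm_def]
  apply Finset.sup_mono_fun
  intro i _
  apply Finset.sum_le_sum
  intro j _
  have h2 : ‖B i j‖ ≤ ‖C i j‖ := by
    rw [Real.norm_eq_abs, Real.norm_eq_abs]
    exact (h i j).trans (le_abs_self _)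
  exact_mod_cast h2

lemma nnnorm_fromBlocks_le (a b c d : Matrix m m ℝ) :
    ‖Matrix.fromBlocks a b c d‖₊ ≤ ‖a‖₊ + ‖b‖₊ + ‖c‖₊ + ‖d‖₊ := by
  rw [Matrix.linfty_opNNNorm_def]
  apply Finset.sup_le
  rintro (i | i) _
  · have : ∑ j : m ⊕ m, ‖Matrix.fromBlocks a b c d (Sum.inl i) j‖₊
        = (∑ j : m, ‖a i j‖₊) + ∑ j : m, ‖b i j‖₊ := by
      rw [Fintype.sum_sum_type]; rfl
    rw [this]
    calc (∑ j : m, ‖a i j‖₊) + ∑ j : m, ‖b i j‖₊ ≤ ‖a‖₊ + ‖b‖₊ :=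
          add_le_add (row_sum_le_nnnorm a i) (row_sum_le_nnnorm b i)
      _ ≤ ‖a‖₊ + ‖b‖₊ + ‖c‖₊ + ‖d‖₊ := le_add_right (le_add_right le_rfl)
  · have : ∑ j : m ⊕ m, ‖Matrix.fromBlocks a b c d (Sum.inr i) j‖₊
        = (∑ j : m, ‖c i j‖₊) + ∑ j : m, ‖d i j‖₊ := by
      rw [Fintype.sum_sum_type]; rfl
    rw [this]
    calc (∑ j : m, ‖c i j‖₊) + ∑ j : m, ‖d i j‖₊ ≤ ‖c‖₊ + ‖d‖₊ :=
          add_le_add (row_sum_le_nnnorm c i) (row_sum_le_nnnorm d i)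
      _ ≤ ‖a‖₊ + ‖b‖₊ + (‖c‖₊ + ‖d‖₊) := le_add_self
      _ = ‖a‖₊ + ‖b‖₊ + ‖c‖₊ + ‖d‖₊ := by ring
  
lemma nnnorm_blocks₁₁_le (a b c d : Matrix m m ℝ) :
    ‖a‖₊ ≤ ‖Matrix.fromBlocks a b c d‖₊ := by
  conv_lhs => rw [Matrix.linfty_opNNNorm_def]
  apply Finset.sup_le
  intro i _
  calc ∑ j : m, ‖a i j‖₊
      ≤ ∑ j : m ⊕ m, ‖Matrix.fromBlocks a b c d (Sum.inl i) j‖₊ := by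
        rw [Fintype.sum_sum_type]
        exact le_self_add
    _ ≤ ‖Matrix.fromBlocks a b c d‖₊ := by
        rw [Matrix.linfty_opNNNorm_def]
        exact Finset.le_sup (f := fun i => ∑ j, ‖Matrix.fromBlocks a b c d i j‖₊)
          (Finset.mem_univ _)

end mat2

lemma absorb {C t u : ℝ≥0} (h : t < u) :
    ∀ᶠ k : ℕ in atTop, C * ((k : ℝ≥0) + 1) * t ^ k ≤ u ^ k := by
  have hu : (0:ℝ) < u := lt_of_le_of_lt t.coe_nonneg (by exact_mod_cast h)
  have hx0 : (0:ℝ) ≤ (t:ℝ) / u := by positivity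
  have hx1 : (t:ℝ) / u < 1 := by rw [div_lt_one hu]; exact_mod_cast h
  have h1 : Tendsto (fun k : ℕ => (C:ℝ) * ((k + 1) * ((t:ℝ)/u) ^ k)) atTop (𝓝 0) := by
    have base : Tendsto (fun k : ℕ => ((k:ℝ) + 1) * ((t:ℝ)/u) ^ k) atTop (𝓝 0) := by
      have a1 := tendsto_pow_const_mul_const_pow_of_lt_one 1 hx0 hx1
      have a2 := tendsto_pow_atTop_nhds_zero_of_lt_one hx0 hx1
      have a3 : (fun k : ℕ => ((k:ℝ) + 1) * ((t:ℝ)/u) ^ k)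
          = fun k : ℕ => (k:ℝ)^1 * ((t:ℝ)/u) ^ k + ((t:ℝ)/u) ^ k := by
        funext k; ring
      rw [a3]
      simpa using a1.add a2
    simpa using base.const_mul (C:ℝ)
  have h2 := h1.eventually_lt_const (by norm_num : (0:ℝ) < 1)
  filter_upwards [h2] with k hk
  have : (C:ℝ) * ((k:ℝ) + 1) * (t:ℝ) ^ k ≤ (u:ℝ) ^ k := by
    have hk' : (C:ℝ) * (((k:ℝ) + 1) * ((t:ℝ)/u) ^ k) * (u:ℝ)^k ≤ 1 * (u:ℝ)^k :=
      mul_le_mul_of_nonneg_right hk.le (by positivity)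
    calc (C:ℝ) * ((k:ℝ) + 1) * (t:ℝ) ^ k
        = (C:ℝ) * (((k:ℝ) + 1) * ((t:ℝ)/u) ^ k) * (u:ℝ)^k := by
          field_simp
          rw [mul_assoc, ← mul_pow, div_mul_cancel₀ _ hu.ne']
      _ ≤ 1 * (u:ℝ)^k := hk'
      _ = (u:ℝ)^k := one_mul _
  exact_mod_cast this

section comb
variable {m : Type*} [Fintype m] [DecidableEq m]

/-- `Xs A1 A2 k`: coefficient matrices of powers of the companion block matrix. -/
def Xs (A1 A2 : Matrix m m ℝ) : ℕ → Matrix m m ℝ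
  | 0 => 1
  | 1 => A1
  | (k+2) => Xs A1 A2 (k+1) * A1 + Xs A1 A2 k * A2

/-- `Ys A1 A2 k j`: sum of all products of `k` factors, each `A1` (weight 1) or `A2`
(weight 2), of total weight `j`. -/
def Ys (A1 A2 : Matrix m m ℝ) : ℕ → ℕ → Matrix m m ℝ
  | 0, 0 => 1
  | 0, _+1 => 0
  | _+1, 0 => 0
  | k+1, 1 => Ys A1 A2 k 0 * A1
  | k+1, (j+2) => Ys A1 A2 k (j+1) * A1 + Ys A1 A2 k j * A2

variable (A1 A2 : Matrix m m ℝ)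

lemma entry_nonneg_mul {B C : Matrix m m ℝ} (hB : ∀ i j, 0 ≤ B i j)
    (hC : ∀ i j, 0 ≤ C i j) : ∀ i j, 0 ≤ (B * C) i j := by
  intro i j
  rw [Matrix.mul_apply]
  exact Finset.sum_nonneg fun l _ => mul_nonneg (hB i l) (hC l j)

variable (h1 : ∀ i j, 0 ≤ A1 i j) (h2 : ∀ i j, 0 ≤ A2 i j)
include h1 h2

lemma Xs_nonneg : ∀ k, ∀ i j, 0 ≤ Xs A1 A2 k i j := by
  intro k
  induction k using Nat.twoStepInduction with
  | zero => intro i j; rw [Xs]; rw [Matrix.one_apply]; positivity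
  | one => intro i j; rw [Xs]; exact h1 i j
  | more k ih1 ih2 =>
    intro i j
    rw [Xs]
    have := add_nonneg (entry_nonneg_mul ih2 h1 i j) (entry_nonneg_mul ih1 h2 i j)
    simpa using this

lemma Ys_nonneg : ∀ k j, ∀ i i', 0 ≤ Ys A1 A2 k j i i' := by
  intro k
  induction k with
  | zero =>
    intro j i i'
    match j with
    | 0 => rw [Ys]; rw [Matrix.one_apply]; positivity
    | j+1 => rw [Ys]; simp
  | succ k ih =>
    intro j i i'
    match j with
    | 0 => rw [Ys]; simp
    | 1 => rw [Ys]; exact entry_nonneg_mul (ih 0) h1 i i'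
    | j+2 =>
      rw [Ys]
      have := add_nonneg (entry_nonneg_mul (ih (j+1)) h1 i i')
        (entry_nonneg_mul (ih j) h2 i i')
      simpa using this

end comb

section comb2
variable {m : Type*} [Fintype m] [DecidableEq m] (A1 A2 : Matrix m m ℝ)

lemma Ys_zero_lo : ∀ k j, j < k → Ys A1 A2 k j = 0 := by
  intro k
  induction k with
  | zero => intro j hj; omega
  | succ k ih =>
    intro j hj
    match j, hj with
    | 0, _ => rw [Ys]
    | 1, hj =>
      rw [Ys, ih 0 (by omega), zero_mul]
    | j+2, hj =>
      rw [Ys, ih (j+1) (by omega), ih j (by omega), zero_mul, zero_mul, add_zero]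

lemma Ys_zero_hi : ∀ k j, 2 * k < j → Ys A1 A2 k j = 0 := by
  intro k
  induction k with
  | zero =>
    intro j hj
    match j, hj with
    | j+1, _ => rw [Ys]
  | succ k ih =>
    intro j hj
    match j, hj with
    | j+2, hj =>
      rw [Ys, ih (j+1) (by omega), ih j (by omega), zero_mul, zero_mul, add_zero]

lemma Mpow_eq : ∀ k, (A1 + A2) ^ k = ∑ j ∈ Finset.range (2 * k + 1), Ys A1 A2 k j := by
  intro k
  induction k with
  | zero => simp [Ys]
  | succ k ih =>
    rw [pow_succ, ih]
    have target : (∑ j ∈ Finset.range (2*k+1), Ys A1 A2 k j) * (A1 + A2)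
        = (∑ j ∈ Finset.range (2*k+1), Ys A1 A2 k j * A1)
          + ∑ j ∈ Finset.range (2*k+1), Ys A1 A2 k j * A2 := by
      rw [Finset.sum_mul, ← Finset.sum_add_distrib]
      congr 1; funext j; rw [mul_add]
    rw [target]
    have e1 : (2 * (k+1) + 1) = (2 * k + 1 + 1) + 1 := by ring
    rw [e1]
    conv_rhs => rw [Finset.sum_range_succ', Finset.sum_range_succ']
    have e2 : ∀ j : ℕ, Ys A1 A2 (k+1) (j + 1 + 1) = Ys A1 A2 k (j+1) * A1 + Ys A1 A2 k j * A2 := by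
      intro j; rw [show j + 1 + 1 = j + 2 from rfl, Ys]
    have e3 : Ys A1 A2 (k+1) (0 + 1) = Ys A1 A2 k 0 * A1 := by
      rw [show (0:ℕ)+1 = 1 from rfl, Ys]
    have e4 : Ys A1 A2 (k+1) 0 = 0 := by rw [Ys]
    simp only [e2, e3, e4, add_zero]
    rw [Finset.sum_add_distrib]
    have e5 : (∑ j ∈ Finset.range (2*k+1), Ys A1 A2 k (j+1) * A1) + Ys A1 A2 k 0 * A1
        = ∑ j ∈ Finset.range (2*k+1+1), Ys A1 A2 k j * A1 :=
      (Finset.sum_range_succ' (fun j => Ys A1 A2 k j * A1) (2*k+1)).symm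
    have e6 : ∑ j ∈ Finset.range (2*k+1+1), Ys A1 A2 k j * A1
        = ∑ j ∈ Finset.range (2*k+1), Ys A1 A2 k j * A1 := by
      rw [Finset.sum_range_succ, Ys_zero_hi A1 A2 k (2*k+1) (by omega), zero_mul, add_zero]
    rw [add_right_comm, e5, e6]

lemma Xs_eq : ∀ j, Xs A1 A2 j = ∑ k ∈ Finset.range (j+1), Ys A1 A2 k j := by
  intro j
  induction j using Nat.twoStepInduction with
  | zero => rw [Xs]; simp [Ys]
  | one =>
    rw [Xs, Finset.sum_range_succ, Finset.sum_range_one]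
    rw [show Ys A1 A2 0 1 = 0 from rfl, show Ys A1 A2 1 1 = Ys A1 A2 0 0 * A1 from rfl,
      show Ys A1 A2 0 0 = 1 from rfl, zero_add, one_mul]
  | more j ih1 ih2 =>
    rw [Xs, ih1, ih2]
    -- goal : Σ_{k ∈ range (j+2)} Y k (j+1) * A1 + Σ_{k ∈ range (j+1)} Y k j * A2
    --        = Σ_{k ∈ range (j+3)} Y k (j+2)
    rw [Finset.sum_mul, Finset.sum_mul]
    have pad : ∑ k ∈ Finset.range (j+1), Ys A1 A2 k j * A2
        = ∑ k ∈ Finset.range (j+2), Ys A1 A2 k j * A2 := by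
      conv_rhs => rw [Finset.sum_range_succ]
      rw [Ys_zero_lo A1 A2 (j+1) j (by omega), zero_mul, add_zero]
    rw [pad, ← Finset.sum_add_distrib]
    have e7 : ∀ k : ℕ, Ys A1 A2 k (j+1) * A1 + Ys A1 A2 k j * A2 = Ys A1 A2 (k+1) (j+2) := by
      intro k; rw [Ys]
    simp only [e7]
    rw [Finset.sum_range_succ' (fun k => Ys A1 A2 k (j+2)) (j+2),
      show Ys A1 A2 0 (j+2) = 0 from rfl, add_zero]

end comb2

section comb3
variable {m : Type*} [Fintype m] [DecidableEq m] (A1 A2 : Matrix m m ℝ)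

lemma Wpow : ∀ k, (Matrix.fromBlocks A1 A2 (1 : Matrix m m ℝ) 0)^(k+2)
    = Matrix.fromBlocks (Xs A1 A2 (k+2)) (Xs A1 A2 (k+1) * A2)
        (Xs A1 A2 (k+1)) (Xs A1 A2 k * A2) := by
  intro k
  induction k with
  | zero =>
    rw [Xs, sq, Matrix.fromBlocks_multiply]
    simp [Xs]
  | succ k ih =>
    rw [show k+1+2 = (k+2)+1 from rfl, pow_succ, ih, Matrix.fromBlocks_multiply]
    rw [show k+1+1 = k+2 from rfl, Xs]
    simp [Xs]

lemma Ys_le_Mpow (h1 : ∀ i j, 0 ≤ A1 i j) (h2 : ∀ i j, 0 ≤ A2 i j) :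
    ∀ k j i i', Ys A1 A2 k j i i' ≤ ((A1+A2)^k) i i' := by
  intro k j i i'
  rw [Mpow_eq, Matrix.sum_apply]
  by_cases hj : j < 2*k+1
  · exact Finset.single_le_sum (f := fun j' => Ys A1 A2 k j' i i')
      (fun j' _ => Ys_nonneg A1 A2 h1 h2 k j' i i') (Finset.mem_range.mpr hj)
  · rw [Ys_zero_hi A1 A2 k j (by omega)]
    exact Finset.sum_nonneg fun j' _ => Ys_nonneg A1 A2 h1 h2 k j' i i'

lemma Ys_le_Xs (h1 : ∀ i j, 0 ≤ A1 i j) (h2 : ∀ i j, 0 ≤ A2 i j) :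
    ∀ k j i i', Ys A1 A2 k j i i' ≤ Xs A1 A2 j i i' := by
  intro k j i i'
  rw [Xs_eq, Matrix.sum_apply]
  by_cases hk : k < j+1
  · exact Finset.single_le_sum (f := fun k' => Ys A1 A2 k' j i i')
      (fun k' _ => Ys_nonneg A1 A2 h1 h2 k' j i i') (Finset.mem_range.mpr hk)
  · rw [Ys_zero_lo A1 A2 k j (by omega)]
    exact Finset.sum_nonneg fun k' _ => Ys_nonneg A1 A2 h1 h2 k' j i i'

end comb3

section main
variable {m : Type*} [Fintype m] [DecidableEq m]

lemma main_lemma (A1 A2 : Matrix m m ℝ) (h1 : ∀ i j, 0 ≤ A1 i j)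
    (h2 : ∀ i j, 0 ≤ A2 i j) :
    specRad (Matrix.fromBlocks A1 A2 (1 : Matrix m m ℝ) 0) < 1 ↔ specRad (A1 + A2) < 1 := by
  rw [specRad_lt_one_iff_pow, specRad_lt_one_iff_pow]
  constructor
  · -- ρ(W) < 1 → ρ(M) < 1
    rintro ⟨r, hr, hev⟩
    obtain ⟨N, hN⟩ := eventually_atTop.mp hev
    obtain ⟨u, hu1, hu2⟩ := exists_between hr
    refine ⟨u, hu2, ?_⟩
    have hXb : ∀ j, N + 2 ≤ j → ‖Xs A1 A2 j‖₊ ≤ r ^ j := by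
      intro j hj
      obtain ⟨k, rfl⟩ : ∃ k, j = k + 2 := ⟨j - 2, by omega⟩
      calc ‖Xs A1 A2 (k+2)‖₊
          ≤ ‖(Matrix.fromBlocks A1 A2 (1 : Matrix m m ℝ) 0)^(k+2)‖₊ := by
            rw [Wpow]; exact nnnorm_blocks₁₁_le _ _ _ _
        _ ≤ r ^ (k+2) := hN (k+2) (by omega)
    have key : ∀ k, N + 2 ≤ k → ‖(A1 + A2) ^ k‖₊ ≤ 2 * ((k:ℝ≥0)+1) * r ^ k := by
      intro k hk
      calc ‖(A1 + A2) ^ k‖₊ = ‖∑ j ∈ Finset.range (2*k+1), Ys A1 A2 k j‖₊ := by rw [Mpow_eq]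
        _ ≤ ∑ j ∈ Finset.range (2*k+1), ‖Ys A1 A2 k j‖₊ := nnnorm_sum_le _ _
        _ ≤ ∑ _j ∈ Finset.range (2*k+1), r ^ k := by
            apply Finset.sum_le_sum
            intro j _
            by_cases hjk : j < k
            · rw [Ys_zero_lo A1 A2 k j hjk]
              simp
            · have hjN : N + 2 ≤ j := by omega
              calc ‖Ys A1 A2 k j‖₊ ≤ ‖Xs A1 A2 j‖₊ := by
                    apply nnnorm_le_of_abs_le
                    intro i i'
                    rw [abs_of_nonneg (Ys_nonneg A1 A2 h1 h2 k j i i')]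
                    exact Ys_le_Xs A1 A2 h1 h2 k j i i'
                _ ≤ r ^ j := hXb j hjN
                _ ≤ r ^ k := pow_le_pow_of_le_one zero_le hr.le (by omega)
        _ = (2*k+1 : ℕ) • (r ^ k) := by rw [Finset.sum_const, Finset.card_range]
        _ ≤ 2 * ((k:ℝ≥0)+1) * r ^ k := by
            rw [nsmul_eq_mul]
            apply mul_le_mul_left
            push_cast
            rw [mul_add, mul_one]
            exact add_le_add (le_refl _) one_le_two
    filter_upwards [absorb (C := 2) hu1, eventually_ge_atTop (N+2)] with k hab hk
    exact (key k hk).trans hab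
  · -- ρ(M) < 1 → ρ(W) < 1
    rintro ⟨r, hr, hev⟩
    obtain ⟨N, hN⟩ := eventually_atTop.mp hev
    set s := NNReal.sqrt r with hs_def
    have hs1 : s < 1 := by
      rw [hs_def, show (1:ℝ≥0) = NNReal.sqrt 1 by rw [NNReal.sqrt_one]]
      exact NNReal.sqrt_lt_sqrt.mpr hr
    have hsq : s ^ 2 = r := NNReal.sq_sqrt r
    have hX : ∀ j, 2 * N ≤ j → ‖Xs A1 A2 j‖₊ ≤ ((j:ℝ≥0)+1) * s ^ j := by
      intro j hj
      calc ‖Xs A1 A2 j‖₊ = ‖∑ k ∈ Finset.range (j+1), Ys A1 A2 k j‖₊ := by rw [Xs_eq]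
        _ ≤ ∑ k ∈ Finset.range (j+1), ‖Ys A1 A2 k j‖₊ := nnnorm_sum_le _ _
        _ ≤ ∑ _k ∈ Finset.range (j+1), s ^ j := by
            apply Finset.sum_le_sum
            intro k _
            by_cases hkj : 2 * k < j
            · rw [Ys_zero_hi A1 A2 k j hkj]; simp
            · have hkN : N ≤ k := by omega
              calc ‖Ys A1 A2 k j‖₊ ≤ ‖(A1+A2)^k‖₊ := by
                    apply nnnorm_le_of_abs_le
                    intro i i'
                    rw [abs_of_nonneg (Ys_nonneg A1 A2 h1 h2 k j i i')]
                    exact Ys_le_Mpow A1 A2 h1 h2 k j i i'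
                _ ≤ r ^ k := hN k hkN
                _ = s ^ (2 * k) := by rw [← hsq, ← pow_mul]
                _ ≤ s ^ j := pow_le_pow_of_le_one zero_le hs1.le (by omega)
        _ = (j+1 : ℕ) • (s ^ j) := by rw [Finset.sum_const, Finset.card_range]
        _ = ((j:ℝ≥0)+1) * s ^ j := by rw [nsmul_eq_mul]; push_cast; ring_nf
    obtain ⟨t, ht1, ht2⟩ := exists_between hs1
    have ht0 : 0 < t := lt_of_le_of_lt (zero_le : 0 ≤ s) ht1
    -- eventually ‖Xs j‖₊ ≤ t ^ j
    have evX : ∀ᶠ j in atTop, ‖Xs A1 A2 j‖₊ ≤ t ^ j := by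
      filter_upwards [absorb (C := 1) ht1, eventually_ge_atTop (2*N)] with j hab hj
      calc ‖Xs A1 A2 j‖₊ ≤ ((j:ℝ≥0)+1) * s ^ j := hX j hj
        _ = 1 * ((j:ℝ≥0)+1) * s ^ j := by rw [one_mul]
        _ ≤ t ^ j := hab
    obtain ⟨N₁, hN₁⟩ := eventually_atTop.mp evX
    obtain ⟨u, hu1, hu2⟩ := exists_between ht2
    refine ⟨u, hu2, ?_⟩
    set a := ‖A2‖₊ with ha_def
    set C : ℝ≥0 := (2 + 2 * a) * (t⁻¹) ^ 2 with hC_def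
    have hWb : ∀ K, N₁ + 2 ≤ K → ‖(Matrix.fromBlocks A1 A2 (1 : Matrix m m ℝ) 0) ^ K‖₊
        ≤ C * t ^ K := by
      intro K hK
      obtain ⟨k, rfl⟩ : ∃ k, K = k + 2 := ⟨K - 2, by omega⟩
      have b0 : ‖Xs A1 A2 k‖₊ ≤ t ^ k := hN₁ k (by omega)
      have b1 : ‖Xs A1 A2 (k+1)‖₊ ≤ t ^ (k+1) := hN₁ (k+1) (by omega)
      have b2 : ‖Xs A1 A2 (k+2)‖₊ ≤ t ^ (k+2) := hN₁ (k+2) (by omega)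
      have tle : ∀ i : ℕ, t ^ (k + i) ≤ t ^ k :=
        fun i => pow_le_pow_of_le_one zero_le ht2.le (by omega)
      calc ‖(Matrix.fromBlocks A1 A2 (1 : Matrix m m ℝ) 0) ^ (k+2)‖₊
          ≤ ‖Xs A1 A2 (k+2)‖₊ + ‖Xs A1 A2 (k+1) * A2‖₊ + ‖Xs A1 A2 (k+1)‖₊
            + ‖Xs A1 A2 k * A2‖₊ := by rw [Wpow]; exact nnnorm_fromBlocks_le _ _ _ _
        _ ≤ t^(k+2) + t^(k+1) * a + t^(k+1) + t^k * a := by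
            refine add_le_add (add_le_add (add_le_add b2 ?_) b1) ?_
            · exact (Matrix.linfty_opNNNorm_mul _ _).trans (mul_le_mul_left b1 a)
            · exact (Matrix.linfty_opNNNorm_mul _ _).trans (mul_le_mul_left b0 a)
        _ ≤ t^k + t^k * a + t^k + t^k * a := by
            refine add_le_add (add_le_add (add_le_add (tle 2) ?_) (tle 1)) ?_
            · exact mul_le_mul_left (tle 1) a
            · exact mul_le_mul_left (le_refl _) a
        _ = (2 + 2 * a) * t ^ k := by ring
        _ = C * t ^ (k+2) := by
            rw [hC_def]
            have : (t⁻¹)^2 * t^(k+2) = t ^ k := by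
              rw [pow_add]
              rw [inv_pow]
              rw [mul_comm (t^k)]
              rw [← mul_assoc]
              rw [inv_mul_cancel₀ (by positivity : t^2 ≠ 0)]
              rw [one_mul]
            rw [mul_assoc, this]
    filter_upwards [absorb (C := C) hu1, eventually_ge_atTop (N₁+2)] with K hab hK
    calc ‖(Matrix.fromBlocks A1 A2 (1 : Matrix m m ℝ) 0) ^ K‖₊ ≤ C * t ^ K := hWb K hK
      _ = C * 1 * t ^ K := by rw [mul_one]
      _ ≤ C * ((K:ℝ≥0)+1) * t ^ K :=
          mul_le_mul_left (mul_le_mul_right (le_add_of_nonneg_left zero_le) C) _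
      _ ≤ u ^ K := hab

end main

theorem stmt6 {n : ℕ} (A P R S : Matrix (Fin n) (Fin n) ℝ)
    (hAsym : Aᵀ = A) (hAinv : IsUnit A.det)
    -- `A = P − R + S` is a double weak splitting of type II
    (hsplit : A = P - R + S) (hPinv : IsUnit P.det)
    (hRP : entryLE 0 (R * P⁻¹)) (hSP : entryLE 0 (-(S * P⁻¹))) :
    specRad (itMatII P R S) < 1 ↔ specRad ((R - S) * P⁻¹) < 1 := by
  have hA1 : ∀ i j, (0:ℝ) ≤ ((R * P⁻¹)ᵀ : Matrix (Fin n) (Fin n) ℝ) i j := by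
    intro i j
    have := hRP j i
    simpa using this
  have hA2 : ∀ i j, (0:ℝ) ≤ ((-(S * P⁻¹))ᵀ : Matrix (Fin n) (Fin n) ℝ) i j := by
    intro i j
    have := hSP j i
    simpa using this
  have heq : itMatII P R S
      = Matrix.fromBlocks ((R * P⁻¹)ᵀ) ((-(S * P⁻¹))ᵀ) (1 : Matrix (Fin n) (Fin n) ℝ) 0 := by
    unfold itMatII
    rw [Matrix.transpose_neg]
  rw [heq, main_lemma _ _ hA1 hA2]
  have htr : (R * P⁻¹)ᵀ + (-(S * P⁻¹))ᵀ = ((R - S) * P⁻¹)ᵀ := by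
    rw [← Matrix.transpose_add, Matrix.sub_mul, ← sub_eq_add_neg]
  rw [htr, specRad_transpose]
end

section
/- Let A = P₁ − R₁ + S₁ = P₂ − R₂ + S₂ be two convergent double weak splittings of type II of a symmetric monotone (i.e. A⁻¹ ≥ 0) nonsingular matrix A ∈ ℝ^{n×n}, with iteration matrices W̃₁ and W̃₂ respectively. If P₁ ≤ P₂ and S₂ ≤ S₁, then ρ(W̃₁) ≤ ρ(W̃₂) < 1. -/
open Matrix Filter Topology

set_option linter.unusedSectionVars false
set_option maxHeartbeats 1000000

open scoped ENNReal NNReal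

section EntryAux
variable {m : Type*} [Fintype m] [DecidableEq m]

lemma eLE_mul {X Y : Matrix m m ℝ} (hX : entryLE 0 X) (hY : entryLE 0 Y) :
    entryLE 0 (X * Y) := by
  intro i j
  simp only [Matrix.zero_apply, Matrix.mul_apply]
  exact Finset.sum_nonneg fun l _ => mul_nonneg (by simpa using hX i l) (by simpa using hY l j)

lemma eLE_add {X Y : Matrix m m ℝ} (hX : entryLE 0 X) (hY : entryLE 0 Y) :
    entryLE 0 (X + Y) := by
  intro i j
  have h1 := hX i j; have h2 := hY i j
  simp only [Matrix.add_apply, Matrix.zero_apply] at *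
  linarith

lemma eLE_smul {X : Matrix m m ℝ} {c : ℝ} (hc : 0 ≤ c) (hX : entryLE 0 X) :
    entryLE 0 (c • X) := by
  intro i j
  have := hX i j
  simp only [Matrix.smul_apply, Matrix.zero_apply, smul_eq_mul] at *
  exact mul_nonneg hc this

lemma eLE_one : entryLE 0 (1 : Matrix m m ℝ) := by
  intro i j
  by_cases h : i = j <;> simp [Matrix.one_apply, h]

lemma eLE_pow {X : Matrix m m ℝ} (hX : entryLE 0 X) (k : ℕ) : entryLE 0 (X ^ k) := by
  induction k with
  | zero => simpa using eLE_one
  | succ k ih => rw [pow_succ]; exact eLE_mul ih hX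

lemma eLE_mul_left {X Y Z : Matrix m m ℝ} (hZ : entryLE 0 Z) (h : entryLE X Y) :
    entryLE (Z * X) (Z * Y) := by
  intro i j
  simp only [Matrix.mul_apply]
  apply Finset.sum_le_sum
  intro l _
  exact mul_le_mul_of_nonneg_left (h l j) (by simpa using hZ i l)

end EntryAux

section SpecAux
variable {m : Type*} [Fintype m] [DecidableEq m]

attribute [local instance] Matrix.linftyOpNormedRing Matrix.linftyOpNormedAlgebra

lemma abs_le_specRad (B : Matrix m m ℝ) {z : ℂ}
    (h : z ∈ spectrum ℂ (B.map Complex.ofReal)) : ‖z‖ ≤ specRad B :=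
  le_csSup (((B.map Complex.ofReal).finite_spectrum.image _).bddAbove) ⟨z, h, rfl⟩

lemma specRad_lt_of_forall {B : Matrix m m ℝ} {t : ℝ} (ht : 0 < t)
    (h : ∀ μ ∈ spectrum ℂ (B.map Complex.ofReal), ‖μ‖ < t) : specRad B < t := by
  rcases ((fun z : ℂ => ‖z‖) '' spectrum ℂ (B.map Complex.ofReal)).eq_empty_or_nonempty with he | hne
  · rw [specRad, he, Real.sSup_empty]; exact ht
  · have hfin : ((fun z : ℂ => ‖z‖) '' spectrum ℂ (B.map Complex.ofReal)).Finite :=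
      (B.map Complex.ofReal).finite_spectrum.image _
    obtain ⟨z, hz, hz'⟩ := hne.csSup_mem hfin
    rw [specRad, ← hz']
    exact h z hz

lemma specRad_nonneg [Nonempty m] (B : Matrix m m ℝ) : 0 ≤ specRad B := by
  obtain ⟨z, hz⟩ := spectrum.nonempty (B.map Complex.ofReal)
  exact le_trans (norm_nonneg z) (abs_le_specRad B hz)

lemma map_matrix_pow (B : Matrix m m ℝ) (k : ℕ) :
    (B ^ k).map Complex.ofReal = (B.map Complex.ofReal) ^ k := by
  have : (B.map Complex.ofReal) = Complex.ofRealHom.mapMatrix B := rfl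
  rw [this, ← map_pow]; rfl

lemma entry_abs_le_norm (X : Matrix m m ℂ) (i j : m) : ‖X i j‖ ≤ ‖X‖ := by
  rw [Matrix.linfty_opNorm_def]
  have h1 : ‖X i j‖₊ ≤ ∑ j' : m, ‖X i j'‖₊ :=
    Finset.single_le_sum (f := fun j' => ‖X i j'‖₊) (fun _ _ => by positivity) (Finset.mem_univ j)
  have h2 : (∑ j' : m, ‖X i j'‖₊)
      ≤ (Finset.univ : Finset m).sup fun i : m => ∑ j' : m, ‖X i j'‖₊ :=
    Finset.le_sup (f := fun i : m => ∑ j' : m, ‖X i j'‖₊) (Finset.mem_univ i)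
  have h3 := le_trans h1 h2
  calc ‖X i j‖ = (‖X i j‖₊ : ℝ) := by
        rw [coe_nnnorm]
    _ ≤ _ := by exact_mod_cast h3

lemma powDecay {B : Matrix m m ℝ} {t : ℝ} (ht : 0 < t) (h : specRad B < t) (i j : m) :
    Tendsto (fun k : ℕ => (B ^ k) i j / t ^ k) atTop (𝓝 0) := by
  set M := B.map Complex.ofReal with hM
  set r : ℝ := max (specRad B) 0 with hr
  have hrt : r < t := by rw [hr]; exact max_lt h ht
  set s : ℝ := (r + t) / 2 with hs
  have hs0 : 0 < s := by
    have : (0:ℝ) ≤ r := le_max_right _ _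
    rw [hs]; linarith
  have hrs : r < s := by rw [hs]; linarith
  have hst : s < t := by rw [hs]; linarith
  have hsr : spectralRadius ℂ M < ENNReal.ofReal s := by
    have hle : spectralRadius ℂ M ≤ ENNReal.ofReal r := by
      rw [spectralRadius]
      apply iSup₂_le
      intro k hk
      have h1 : ‖k‖ ≤ r := by
        exact le_trans (abs_le_specRad B hk) (le_max_left _ _)
      calc (‖k‖₊ : ℝ≥0∞) = ENNReal.ofReal ‖k‖ := (ofReal_norm k).symm
        _ ≤ ENNReal.ofReal r := ENNReal.ofReal_le_ofReal h1
    exact lt_of_le_of_lt hle ((ENNReal.ofReal_lt_ofReal_iff hs0).mpr hrs)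
  have hgel := spectrum.pow_nnnorm_pow_one_div_tendsto_nhds_spectralRadius M
  have hev : ∀ᶠ k : ℕ in atTop, (‖M ^ k‖₊ : ℝ≥0∞) ^ (1 / (k:ℝ)) < ENNReal.ofReal s :=
    hgel.eventually_lt_const hsr
  have hbound : ∀ᶠ k : ℕ in atTop, ‖M ^ k‖ ≤ s ^ k := by
    filter_upwards [hev, eventually_ge_atTop 1] with k hk hk1
    have hk0 : (k:ℝ) ≠ 0 := by positivity
    have h2 : ((‖M ^ k‖₊ : ℝ≥0∞) ^ (1 / (k:ℝ))) ^ (k:ℝ) ≤ (ENNReal.ofReal s) ^ (k:ℝ) :=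
      ENNReal.rpow_le_rpow hk.le (by positivity)
    rw [← ENNReal.rpow_mul, one_div, inv_mul_cancel₀ hk0, ENNReal.rpow_one] at h2
    rw [ENNReal.rpow_natCast] at h2
    have h3 : (‖M ^ k‖₊ : ℝ≥0∞) ≤ ENNReal.ofReal (s ^ k) := by
      rwa [ENNReal.ofReal_pow hs0.le]
    rw [← ENNReal.ofReal_coe_nnreal, coe_nnnorm] at h3
    exact (ENNReal.ofReal_le_ofReal_iff (by positivity)).mp h3
  have habs : ∀ᶠ k : ℕ in atTop, ‖(B ^ k) i j / t ^ k‖ ≤ (s/t) ^ k := by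
    filter_upwards [hbound] with k hk
    have h1 : |(B ^ k) i j| ≤ ‖M ^ k‖ := by
      have h0 : ‖((B ^ k).map Complex.ofReal) i j‖ ≤ ‖M ^ k‖ := by
        rw [map_matrix_pow]; exact entry_abs_le_norm _ i j
      simpa [Matrix.map_apply] using h0
    rw [Real.norm_eq_abs, abs_div, abs_pow, abs_of_pos ht, div_pow]
    exact (div_le_div_iff_of_pos_right (by positivity)).mpr (le_trans h1 hk)
  have hlim : Tendsto (fun k : ℕ => (s/t) ^ k) atTop (𝓝 0) := by
    apply tendsto_pow_atTop_nhds_zero_of_lt_one (by positivity)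
    rw [div_lt_one ht]; exact hst
  exact squeeze_zero_norm' habs hlim

end SpecAux

section SpecDet
variable {m : Type*} [Fintype m] [DecidableEq m]

lemma map_smul_one_sub (B : Matrix m m ℝ) (t : ℝ) :
    (t • (1 : Matrix m m ℝ) - B).map Complex.ofReal
      = (t : ℂ) • (1 : Matrix m m ℂ) - B.map Complex.ofReal := by
  ext i j
  by_cases h : i = j <;>
    simp [Matrix.map_apply, Matrix.sub_apply, Matrix.smul_apply, Matrix.one_apply, h]

lemma mem_spectrum_of_det_eq_zero {M : Matrix m m ℂ} {z : ℂ}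
    (h : (z • (1 : Matrix m m ℂ) - M).det = 0) : z ∈ spectrum ℂ M := by
  rw [spectrum.mem_iff]
  intro hU
  rw [Algebra.algebraMap_eq_smul_one] at hU
  have h2 := (Matrix.isUnit_iff_isUnit_det _).mp hU
  rw [h] at h2
  exact h2.ne_zero rfl

lemma det_eq_zero_of_mem_spectrum {M : Matrix m m ℂ} {z : ℂ}
    (hz : z ∈ spectrum ℂ M) : (z • (1 : Matrix m m ℂ) - M).det = 0 := by
  rw [spectrum.mem_iff, Algebra.algebraMap_eq_smul_one] at hz
  by_contra h0
  exact hz ((Matrix.isUnit_iff_isUnit_det _).mpr (isUnit_iff_ne_zero.mpr h0))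

lemma map_smul_matrix (M : Matrix m m ℝ) (c : ℝ) :
    (c • M).map Complex.ofReal = (c : ℂ) • M.map Complex.ofReal := by
  ext i j; simp [Matrix.map_apply]

lemma spec_scale {M : Matrix m m ℝ} {t : ℝ} (ht : t ≠ 0) {z : ℂ}
    (hz : z ∈ spectrum ℂ (M.map Complex.ofReal)) :
    z / t ∈ spectrum ℂ ((t⁻¹ • M).map Complex.ofReal) := by
  have h1 := det_eq_zero_of_mem_spectrum hz
  have htC : (t : ℂ) ≠ 0 := by exact_mod_cast ht
  rw [map_smul_matrix]
  apply mem_spectrum_of_det_eq_zero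
  have hc : ((t⁻¹ : ℝ) : ℂ) = (t:ℂ)⁻¹ := by push_cast; ring
  rw [hc]
  have h2 : (z / t) • (1 : Matrix m m ℂ) - (t:ℂ)⁻¹ • M.map Complex.ofReal
      = (t:ℂ)⁻¹ • (z • (1 : Matrix m m ℂ) - M.map Complex.ofReal) := by
    rw [smul_sub, smul_smul]
    congr 2
    field_simp
  rw [h2, Matrix.det_smul, h1, mul_zero]

lemma isUnit_smul_one_sub_det {B : Matrix m m ℝ} {t : ℝ} (ht : 0 < t)
    (h : specRad B < t) : IsUnit (t • (1 : Matrix m m ℝ) - B).det := by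
  rw [isUnit_iff_ne_zero]
  intro hdet
  have h3 := RingHom.map_det Complex.ofRealHom (t • (1 : Matrix m m ℝ) - B)
  rw [hdet, map_zero] at h3
  have h4 : ((t:ℂ) • (1 : Matrix m m ℂ) - B.map Complex.ofReal).det = 0 := by
    rw [← map_smul_one_sub]
    exact h3.symm
  have h5 := mem_spectrum_of_det_eq_zero h4
  have h6 := abs_le_specRad B h5
  rw [Complex.norm_real, Real.norm_eq_abs, abs_of_pos ht] at h6
  linarith

lemma inv_entry_nonneg {B : Matrix m m ℝ} {t : ℝ} (ht : 0 < t)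
    (h : specRad B < t) (hB : entryLE 0 B) :
    entryLE 0 (t • (1 : Matrix m m ℝ) - B)⁻¹ := by
  intro i j
  have hU : IsUnit (t • (1 : Matrix m m ℝ) - B).det := isUnit_smul_one_sub_det ht h
  set V := (t • (1 : Matrix m m ℝ) - B)⁻¹ with hV
  have hV1 : (t • (1 : Matrix m m ℝ) - B) * V = 1 := Matrix.mul_nonsing_inv _ hU
  set S : ℕ → Matrix m m ℝ := fun K => ∑ k ∈ Finset.range K, (t⁻¹) ^ (k+1) • B ^ k with hS
  have key : ∀ K, S K * (t • (1 : Matrix m m ℝ) - B) = 1 - (t⁻¹) ^ K • B ^ K := by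
    intro K
    induction K with
    | zero => simp [hS]
    | succ K ih =>
      have e1 : S (K+1) = S K + (t⁻¹) ^ (K+1) • B ^ K := by
        rw [hS]; exact Finset.sum_range_succ _ _
      rw [e1, Matrix.add_mul, ih]
      have e2 : ((t⁻¹) ^ (K+1) • B ^ K) * (t • (1 : Matrix m m ℝ) - B)
          = (t⁻¹) ^ K • B ^ K - (t⁻¹) ^ (K+1) • B ^ (K+1) := by
        rw [Matrix.smul_mul, mul_sub, Matrix.mul_smul, mul_one, ← pow_succ]
        rw [smul_sub, smul_smul]
        congr 2
        rw [pow_succ]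
        field_simp
      rw [e2]
      abel
  have hSV : ∀ K, S K = (1 - (t⁻¹) ^ K • B ^ K) * V := by
    intro K
    calc S K = S K * ((t • (1 : Matrix m m ℝ) - B) * V) := by rw [hV1, Matrix.mul_one]
      _ = (S K * (t • (1 : Matrix m m ℝ) - B)) * V := by rw [Matrix.mul_assoc]
      _ = _ := by rw [key]
  have hentry : ∀ K, (S K) i j = V i j - ∑ l, ((B ^ K) i l / t ^ K) * V l j := by
    intro K
    rw [hSV K, Matrix.sub_mul, Matrix.one_mul, Matrix.sub_apply, Matrix.smul_mul,
      Matrix.smul_apply, Matrix.mul_apply, smul_eq_mul, Finset.mul_sum]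
    congr 1
    apply Finset.sum_congr rfl
    intro l _
    rw [div_eq_mul_inv, ← inv_pow]
    ring
  have hlim : Tendsto (fun K => (S K) i j) atTop (𝓝 (V i j)) := by
    have hz : Tendsto (fun K => ∑ l, ((B ^ K) i l / t ^ K) * V l j) atTop (𝓝 0) := by
      have h7 := tendsto_finset_sum (Finset.univ : Finset m)
        (fun l _ => (powDecay ht h i l).mul_const (V l j))
      simpa using h7
    have h8 := tendsto_const_nhds (x := V i j) (f := atTop (α := ℕ)) |>.sub hz
    rw [sub_zero] at h8
    apply h8.congr
    intro K
    rw [hentry K]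
  have hpos : ∀ K, 0 ≤ (S K) i j := by
    intro K
    have hSapp : (S K) i j = ∑ k ∈ Finset.range K, t⁻¹ ^ (k+1) * (B ^ k) i j := by
      simp [hS, Matrix.sum_apply]
    rw [hSapp]
    apply Finset.sum_nonneg
    intro k _
    exact mul_nonneg (by positivity) (by simpa using (eLE_pow hB k) i j)
  have := ge_of_tendsto hlim (Filter.Eventually.of_forall hpos)
  simpa using this

lemma abs_lt_one_of_majorant {C U : Matrix m m ℝ} (hC : entryLE 0 C) (hU0 : entryLE 0 U)
    (hU : entryLE (1 + C * U) U) {z : ℂ} (hz : z ∈ spectrum ℂ (C.map Complex.ofReal)) :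
    ‖z‖ < 1 := by
  classical
  have hone : entryLE (1 : Matrix m m ℝ) U := by
    intro i j
    have h1 := hU i j
    have h2 : (0:ℝ) ≤ (C * U) i j := by simpa using (eLE_mul hC hU0) i j
    simp only [Matrix.add_apply] at h1
    linarith
  have hsum : ∀ K : ℕ, entryLE (∑ k ∈ Finset.range (K+1), C ^ k) U := by
    intro K
    induction K with
    | zero => simpa using hone
    | succ K ih =>
      have hgeom : ∑ k ∈ Finset.range (K+1+1), C ^ k
          = (C * ∑ k ∈ Finset.range (K+1), C ^ k) + 1 := geom_sum_succ
      intro i j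
      rw [hgeom]
      have h4 := (eLE_mul_left hC ih) i j
      have h5 := hU i j
      simp only [Matrix.add_apply] at *
      linarith
  have hterm : ∀ i j : m, Tendsto (fun k : ℕ => (C ^ k) i j) atTop (𝓝 0) := by
    intro i j
    have hbK : ∀ K : ℕ, ∑ k ∈ Finset.range K, (C ^ k) i j ≤ U i j := by
      intro K
      rcases K with _ | K
      · simpa using hU0 i j
      · have h6 := hsum K i j
        rw [Matrix.sum_apply] at h6
        exact h6
    have hsummable : Summable (fun k : ℕ => (C ^ k) i j) :=
      summable_of_sum_range_le (fun k => by simpa using (eLE_pow hC k) i j) hbK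
    exact hsummable.tendsto_atTop_zero
  have hdet := det_eq_zero_of_mem_spectrum hz
  obtain ⟨v, hv0, hv⟩ := (Matrix.exists_mulVec_eq_zero_iff).mpr hdet
  have hMv : (C.map Complex.ofReal).mulVec v = z • v := by
    rw [Matrix.sub_mulVec, Matrix.smul_mulVec, Matrix.one_mulVec] at hv
    have := sub_eq_zero.mp hv
    exact this.symm
  have hpow : ∀ k : ℕ, ((C.map Complex.ofReal) ^ k).mulVec v = z ^ k • v := by
    intro k
    induction k with
    | zero => simp
    | succ k ih =>
      rw [pow_succ', ← Matrix.mulVec_mulVec, ih]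
      rw [Matrix.mulVec_smul, hMv, smul_smul, ← pow_succ]
  obtain ⟨i, hi0⟩ := Function.ne_iff.mp hv0
  have hi : v i ≠ 0 := by simpa using hi0
  have hvip : 0 < ‖v i‖ := norm_pos_iff.mpr hi
  have hb : ∀ k : ℕ, ‖z‖ ^ k * ‖v i‖
      ≤ ∑ j : m, (C ^ k) i j * ‖v j‖ := by
    intro k
    have h7 : z ^ k * v i = ∑ j : m, ((C ^ k).map Complex.ofReal) i j * v j := by
      have h8 := congrFun (hpow k) i
      simp only [Matrix.mulVec, dotProduct, Pi.smul_apply, smul_eq_mul] at h8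
      rw [map_matrix_pow]
      exact h8.symm
    calc ‖z‖ ^ k * ‖v i‖ = ‖z ^ k * v i‖ := by
          rw [norm_mul, norm_pow]
      _ = ‖∑ j : m, ((C ^ k).map Complex.ofReal) i j * v j‖ := by rw [h7]
      _ ≤ ∑ j : m, ‖((C ^ k).map Complex.ofReal) i j * v j‖ :=
          norm_sum_le _ _
      _ = ∑ j : m, (C ^ k) i j * ‖v j‖ := by
          apply Finset.sum_congr rfl
          intro j _
          rw [norm_mul, Matrix.map_apply, Complex.norm_real, Real.norm_eq_abs,
            abs_of_nonneg (by simpa using (eLE_pow hC k) i j)]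
  have hrhs : Tendsto (fun k : ℕ => ∑ j : m, (C ^ k) i j * ‖v j‖) atTop (𝓝 0) := by
    have h9 := tendsto_finset_sum (Finset.univ : Finset m)
      (fun j _ => (hterm i j).mul_const (‖v j‖))
    simpa using h9
  have hev2 : ∀ᶠ k : ℕ in atTop,
      ∑ j : m, (C ^ k) i j * ‖v j‖ < ‖v i‖ :=
    hrhs.eventually_lt_const hvip
  obtain ⟨k, hk1, hk2⟩ := (hev2.and (eventually_ge_atTop 1)).exists
  have h8 : ‖z‖ ^ k * ‖v i‖ < ‖v i‖ :=
    lt_of_le_of_lt (hb k) hk1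
  have h9 : ‖z‖ ^ k < 1 := (mul_lt_iff_lt_one_left hvip).mp h8
  exact (pow_lt_one_iff_of_nonneg (norm_nonneg z) (by omega)).mp h9

lemma specRad_lt_of_majorant {W U : Matrix m m ℝ} {t : ℝ} (ht : 0 < t)
    (hW : entryLE 0 W) (hU0 : entryLE 0 U)
    (hU : entryLE (1 + (t⁻¹ • W) * U) U) : specRad W < t := by
  have hC : entryLE 0 (t⁻¹ • W) := eLE_smul (by positivity) hW
  apply specRad_lt_of_forall ht
  intro μ hμ
  have h1 := abs_lt_one_of_majorant hC hU0 hU (spec_scale ht.ne' hμ)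
  rw [norm_div, Complex.norm_real, Real.norm_eq_abs, abs_of_pos ht, div_lt_one ht] at h1
  exact h1

end SpecDet

section Cancel
variable {m : Type*} [Fintype m] [DecidableEq m]

lemma eq_of_mul_right {X Z M N : Matrix m m ℝ} (hXZ : X * Z = 1)
    (h : M * X = N * X) : M = N := by
  calc M = M * (X * Z) := by rw [hXZ, Matrix.mul_one]
    _ = (M * X) * Z := by rw [Matrix.mul_assoc]
    _ = (N * X) * Z := by rw [h]
    _ = N * (X * Z) := by rw [Matrix.mul_assoc]
    _ = N := by rw [hXZ, Matrix.mul_one]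

lemma eLE_blockW {G H : Matrix m m ℝ} (hG : entryLE 0 G) (hH : entryLE 0 H) :
    entryLE 0 (Matrix.fromBlocks Gᵀ Hᵀ (1 : Matrix m m ℝ) 0) := by
  intro i j
  rcases i with i | i <;> rcases j with j | j
  · simpa using hG j i
  · simpa using hH j i
  · simp only [Matrix.fromBlocks_apply₂₁, Matrix.zero_apply]
    by_cases h : i = j <;> simp [Matrix.one_apply, h]
  · simp

lemma blockInv {G H : Matrix m m ℝ} {t : ℝ} (ht : 0 < t)
    (hG : entryLE 0 G) (hH : entryLE 0 H)
    (hs : specRad (Matrix.fromBlocks Gᵀ Hᵀ (1 : Matrix m m ℝ) 0) < t) :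
    ∃ Z : Matrix m m ℝ, entryLE 0 Z ∧
      (t^2 • (1 : Matrix m m ℝ) - t • G - H) * Z = 1 ∧
      Z * (t^2 • (1 : Matrix m m ℝ) - t • G - H) = 1 := by
  set W : Matrix (m ⊕ m) (m ⊕ m) ℝ := Matrix.fromBlocks Gᵀ Hᵀ 1 0 with hWdef
  have hW0 : entryLE 0 W := eLE_blockW hG hH
  have hUdet : IsUnit (t • (1 : Matrix (m ⊕ m) (m ⊕ m) ℝ) - W).det :=
    isUnit_smul_one_sub_det ht hs
  have hR0 : entryLE 0 (t • (1 : Matrix (m ⊕ m) (m ⊕ m) ℝ) - W)⁻¹ :=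
    inv_entry_nonneg ht hs hW0
  set Rm := (t • (1 : Matrix (m ⊕ m) (m ⊕ m) ℝ) - W)⁻¹ with hRm
  have h1 : (t • (1 : Matrix (m ⊕ m) (m ⊕ m) ℝ) - W) * Rm = 1 := Matrix.mul_nonsing_inv _ hUdet
  have h2 : Rm * (t • (1 : Matrix (m ⊕ m) (m ⊕ m) ℝ) - W) = 1 := Matrix.nonsing_inv_mul _ hUdet
  have hT : t • (1 : Matrix (m ⊕ m) (m ⊕ m) ℝ) - W
      = Matrix.fromBlocks (t • 1 - Gᵀ) (-Hᵀ) (-1) (t • 1) := by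
    have e0 : t • (1 : Matrix (m ⊕ m) (m ⊕ m) ℝ)
        = Matrix.fromBlocks (t • 1) 0 0 (t • 1) := by
      rw [← Matrix.fromBlocks_one, Matrix.fromBlocks_smul]
      congr 1 <;> simp
    rw [hWdef, e0, sub_eq_add_neg, Matrix.fromBlocks_neg, Matrix.fromBlocks_add]
    congr 1 <;> simp [sub_eq_add_neg]
  set R11 := Rm.toBlocks₁₁ with hR11
  set R12 := Rm.toBlocks₁₂ with hR12
  set R21 := Rm.toBlocks₂₁ with hR21
  set R22 := Rm.toBlocks₂₂ with hR22
  have hRB : Rm = Matrix.fromBlocks R11 R12 R21 R22 := (Matrix.fromBlocks_toBlocks Rm).symm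
  rw [hT, hRB, Matrix.fromBlocks_multiply, ← Matrix.fromBlocks_one, Matrix.fromBlocks_inj] at h1 h2
  obtain ⟨h1a, h1b, h1c, h1d⟩ := h1
  obtain ⟨h2a, h2b, h2c, h2d⟩ := h2
  -- h1c : (-1) * R11 + (t•1) * R21 = 0
  have e1 : R11 = t • R21 := by
    have h3 := h1c
    rw [Matrix.neg_mul, Matrix.one_mul, Matrix.smul_mul, Matrix.one_mul] at h3
    rw [neg_add_eq_zero] at h3
    exact h3
  have key1 : (t^2 • (1 : Matrix m m ℝ) - t • Gᵀ - Hᵀ) * R21 = 1 := by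
    have h3 := h1a
    rw [e1] at h3
    have hgoal : (t^2 • (1 : Matrix m m ℝ) - t • Gᵀ - Hᵀ) * R21
        = (t • 1 - Gᵀ) * (t • R21) + (-Hᵀ) * R21 := by
      simp only [Matrix.sub_mul, Matrix.smul_mul, Matrix.mul_smul, Matrix.neg_mul,
        Matrix.one_mul, smul_smul]
      module
    rw [hgoal]
    exact h3
  have e2 : R22 = R21 * (t • 1 - Gᵀ) := by
    have h3 := h2c
    rw [Matrix.mul_neg, Matrix.mul_one] at h3
    have h4 := sub_eq_zero.mp (by rw [← sub_eq_add_neg] at h3; exact h3)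
    exact h4.symm
  have key2 : R21 * (t^2 • (1 : Matrix m m ℝ) - t • Gᵀ - Hᵀ) = 1 := by
    have h3 := h2d
    rw [e2] at h3
    have hgoal : R21 * (t^2 • (1 : Matrix m m ℝ) - t • Gᵀ - Hᵀ)
        = R21 * (-Hᵀ) + (R21 * (t • 1 - Gᵀ)) * (t • 1) := by
      simp only [Matrix.mul_sub, Matrix.mul_smul, Matrix.smul_mul, Matrix.mul_neg,
        Matrix.mul_one, smul_smul]
      module
    rw [hgoal]
    exact h3
  refine ⟨R21ᵀ, ?_, ?_, ?_⟩
  · intro i j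
    have := hR0 (Sum.inr j) (Sum.inl i)
    simpa [hR21, Matrix.toBlocks₂₁] using this
  · have h5 := congrArg Matrix.transpose key2
    rw [Matrix.transpose_mul, Matrix.transpose_one, Matrix.transpose_sub, Matrix.transpose_sub,
      Matrix.transpose_smul, Matrix.transpose_smul, Matrix.transpose_one,
      Matrix.transpose_transpose, Matrix.transpose_transpose] at h5
    exact h5
  · have h5 := congrArg Matrix.transpose key1
    rw [Matrix.transpose_mul, Matrix.transpose_one, Matrix.transpose_sub, Matrix.transpose_sub,
      Matrix.transpose_smul, Matrix.transpose_smul, Matrix.transpose_one,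
      Matrix.transpose_transpose, Matrix.transpose_transpose] at h5
    exact h5

end Cancel

section Key
variable {m : Type*} [Fintype m] [DecidableEq m]

lemma keyStep (A P₁ R₁ S₁ P₂ R₂ S₂ : Matrix m m ℝ)
    (hAinv : IsUnit A.det) (hmono : entryLE 0 A⁻¹)
    (hsplit₁ : A = P₁ - R₁ + S₁) (hPinv₁ : IsUnit P₁.det)
    (hRP₁ : entryLE 0 (R₁ * P₁⁻¹)) (hSP₁ : entryLE 0 (-(S₁ * P₁⁻¹)))
    (hsplit₂ : A = P₂ - R₂ + S₂) (hPinv₂ : IsUnit P₂.det)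
    (hRP₂ : entryLE 0 (R₂ * P₂⁻¹)) (hSP₂ : entryLE 0 (-(S₂ * P₂⁻¹)))
    (hconv₁ : specRad (itMatII P₁ R₁ S₁) < 1)
    (hP : entryLE P₁ P₂) (hS : entryLE S₂ S₁)
    {t : ℝ} (ht0 : 0 < t) (ht1 : t < 1)
    (ht2 : specRad (itMatII P₂ R₂ S₂) < t) :
    specRad (itMatII P₁ R₁ S₁) < t := by
  set G₁ := R₁ * P₁⁻¹ with hG₁
  set H₁ := -(S₁ * P₁⁻¹) with hH₁
  set G₂ := R₂ * P₂⁻¹ with hG₂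
  set H₂ := -(S₂ * P₂⁻¹) with hH₂
  have hW₁eq : itMatII P₁ R₁ S₁ = Matrix.fromBlocks G₁ᵀ H₁ᵀ (1 : Matrix m m ℝ) 0 := by
    rw [itMatII, hG₁, hH₁, Matrix.transpose_neg]
  have hW₂eq : itMatII P₂ R₂ S₂ = Matrix.fromBlocks G₂ᵀ H₂ᵀ (1 : Matrix m m ℝ) 0 := by
    rw [itMatII, hG₂, hH₂, Matrix.transpose_neg]
  have hP₁i : P₁ * P₁⁻¹ = 1 := Matrix.mul_nonsing_inv _ hPinv₁
  have hP₁i' : P₁⁻¹ * P₁ = 1 := Matrix.nonsing_inv_mul _ hPinv₁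
  have hP₂i : P₂ * P₂⁻¹ = 1 := Matrix.mul_nonsing_inv _ hPinv₂
  have hP₂i' : P₂⁻¹ * P₂ = 1 := Matrix.nonsing_inv_mul _ hPinv₂
  have hAi : A * A⁻¹ = 1 := Matrix.mul_nonsing_inv _ hAinv
  have hAi' : A⁻¹ * A = 1 := Matrix.nonsing_inv_mul _ hAinv
  have hAP₁ : A * P₁⁻¹ = 1 - G₁ - H₁ := by
    rw [hsplit₁, hG₁, hH₁, Matrix.add_mul, Matrix.sub_mul, hP₁i, sub_neg_eq_add]
  have hAP₂ : A * P₂⁻¹ = 1 - G₂ - H₂ := by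
    rw [hsplit₂, hG₂, hH₂, Matrix.add_mul, Matrix.sub_mul, hP₂i, sub_neg_eq_add]
  -- splitting 2 at level t
  obtain ⟨Z₂, hZ₂0, hXZ₂, hZX₂⟩ := blockInv ht0 hRP₂ hSP₂ (by rw [← hW₂eq]; exact ht2)
  -- splitting 1 at level 1
  obtain ⟨Z₁, hZ₁0, hXZ₁, hZX₁⟩ := blockInv one_pos hRP₁ hSP₁ (by rw [← hW₁eq]; exact hconv₁)
  have hone_simp : (1:ℝ)^2 • (1 : Matrix m m ℝ) - (1:ℝ) • G₁ - H₁ = 1 - G₁ - H₁ := by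
    simp
  rw [hone_simp] at hXZ₁ hZX₁
  set X₂ := t^2 • (1 : Matrix m m ℝ) - t • G₂ - H₂ with hX₂def
  have hZ₁eq : Z₁ = P₁ * A⁻¹ := by
    have hPA : (A * P₁⁻¹) * (P₁ * A⁻¹) = 1 := by
      rw [Matrix.mul_assoc, ← Matrix.mul_assoc P₁⁻¹, hP₁i', Matrix.one_mul, hAi]
    calc Z₁ = Z₁ * ((A * P₁⁻¹) * (P₁ * A⁻¹)) := by rw [hPA, Matrix.mul_one]
      _ = (Z₁ * (A * P₁⁻¹)) * (P₁ * A⁻¹) := (Matrix.mul_assoc _ _ _).symm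
      _ = (Z₁ * (1 - G₁ - H₁)) * (P₁ * A⁻¹) := by rw [hAP₁]
      _ = P₁ * A⁻¹ := by rw [hZX₁, Matrix.one_mul]
  -- N
  set N := (1 - G₂ - H₂) * Z₂ with hNdef
  have hNid : N = (1-t) • Z₂ + t⁻¹ • (1 : Matrix m m ℝ) + ((1-t) * t⁻¹) • (H₂ * Z₂) := by
    apply eq_of_mul_right hXZ₂
    have hL : N * X₂ = 1 - G₂ - H₂ := by
      rw [hNdef, Matrix.mul_assoc, hZX₂, Matrix.mul_one]
    rw [hL]
    have hR : ((1-t) • Z₂ + t⁻¹ • (1 : Matrix m m ℝ) + ((1-t) * t⁻¹) • (H₂ * Z₂)) * X₂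
        = (1-t) • (1 : Matrix m m ℝ) + t⁻¹ • X₂ + ((1-t) * t⁻¹) • H₂ := by
      rw [Matrix.add_mul, Matrix.add_mul, Matrix.smul_mul, Matrix.smul_mul, Matrix.smul_mul,
        Matrix.one_mul, hZX₂, Matrix.mul_assoc, hZX₂, Matrix.mul_one]
    rw [hR, hX₂def]
    match_scalars <;> field_simp <;> ring
  have hN0 : entryLE 0 N := by
    rw [hNid]
    apply eLE_add (eLE_add (eLE_smul (by linarith) hZ₂0) (eLE_smul (by positivity) eLE_one))
    exact eLE_smul (mul_nonneg (by linarith) (by positivity)) (eLE_mul hSP₂ hZ₂0)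
  have hNA : N = (A * P₂⁻¹) * Z₂ := by rw [hNdef, hAP₂]
  set V₀ := A⁻¹ * N with hV₀def
  have hV₀0 : entryLE 0 V₀ := eLE_mul hmono hN0
  have hV₀eq : V₀ = P₂⁻¹ * Z₂ := by
    rw [hV₀def, hNA, ← Matrix.mul_assoc, ← Matrix.mul_assoc, hAi', Matrix.one_mul]
  -- K and Q's
  set K := t • (P₂ - P₁) + (S₁ - S₂) with hKdef
  have hK0 : entryLE 0 K := by
    intro i j
    have h1 := hP i j
    have h2 := hS i j
    simp only [hKdef, Matrix.add_apply, Matrix.sub_apply, Matrix.smul_apply, smul_eq_mul,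
      Matrix.zero_apply]
    nlinarith
  set Q₁ := t^2 • P₁ - t • R₁ + S₁ with hQ₁def
  set Q₂ := t^2 • P₂ - t • R₂ + S₂ with hQ₂def
  set X₁ := t^2 • (1 : Matrix m m ℝ) - t • G₁ - H₁ with hX₁def
  have hX₁P : X₁ * P₁ = Q₁ := by
    rw [hX₁def, hQ₁def, hG₁, hH₁]
    rw [Matrix.sub_mul, Matrix.sub_mul, Matrix.smul_mul, Matrix.smul_mul, Matrix.one_mul,
      Matrix.neg_mul, Matrix.mul_assoc, Matrix.mul_assoc, hP₁i', Matrix.mul_one, Matrix.mul_one,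
      sub_neg_eq_add]
  have hX₂P : X₂ * P₂ = Q₂ := by
    rw [hX₂def, hQ₂def, hG₂, hH₂]
    rw [Matrix.sub_mul, Matrix.sub_mul, Matrix.smul_mul, Matrix.smul_mul, Matrix.one_mul,
      Matrix.neg_mul, Matrix.mul_assoc, Matrix.mul_assoc, hP₂i', Matrix.mul_one, Matrix.mul_one,
      sub_neg_eq_add]
  have hQQ : Q₁ = Q₂ + (1-t) • K := by
    have hR₁ : R₁ = P₁ + S₁ - A := by rw [hsplit₁]; abel
    have hR₂ : R₂ = P₂ + S₂ - A := by rw [hsplit₂]; abel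
    rw [hQ₁def, hQ₂def, hKdef, hR₁, hR₂]
    module
  -- U
  set U := Z₁ * N with hUdef
  have hU0 : entryLE 0 U := eLE_mul hZ₁0 hN0
  have hXU : X₁ * U = 1 + (1-t) • (K * V₀) := by
    calc X₁ * U = X₁ * ((P₁ * A⁻¹) * N) := by rw [hUdef, hZ₁eq]
      _ = ((X₁ * P₁) * A⁻¹) * N := by simp only [Matrix.mul_assoc]
      _ = (Q₁ * A⁻¹) * N := by rw [hX₁P]
      _ = Q₁ * V₀ := by rw [hV₀def, Matrix.mul_assoc]
      _ = Q₂ * V₀ + (1-t) • (K * V₀) := by rw [hQQ, Matrix.add_mul, Matrix.smul_mul]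
      _ = 1 + (1-t) • (K * V₀) := by
          rw [hV₀eq, ← hX₂P, Matrix.mul_assoc, ← Matrix.mul_assoc P₂, hP₂i, Matrix.one_mul,
            hXZ₂]
  set C₀ := t⁻¹ • G₁ + (t⁻¹ * t⁻¹) • H₁ with hC₀def
  have hC₀0 : entryLE 0 C₀ := eLE_add (eLE_smul (by positivity) hRP₁)
    (eLE_smul (by positivity) hSP₁)
  have hX₁C : X₁ = (t^2) • ((1 : Matrix m m ℝ) - C₀) := by
    rw [hX₁def, hC₀def]
    match_scalars <;> field_simp <;> ring
  have hmaj : entryLE (1 + C₀ * U) U := by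
    have hid : U - C₀ * U = (t⁻¹ * t⁻¹) • (1 : Matrix m m ℝ)
        + (t⁻¹ * t⁻¹ * (1-t)) • (K * V₀) := by
      have h2 : (1 - C₀) * U = (t⁻¹ * t⁻¹) • (X₁ * U) := by
        rw [hX₁C, Matrix.smul_mul, smul_smul,
          show (t⁻¹ * t⁻¹) * (t^2) = 1 by field_simp, one_smul]
      calc U - C₀ * U = (1 - C₀) * U := by rw [Matrix.sub_mul, Matrix.one_mul]
        _ = (t⁻¹ * t⁻¹) • (X₁ * U) := h2
        _ = _ := by rw [hXU, smul_add, smul_smul]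
    intro i j
    have h3 := congrFun (congrFun hid i) j
    simp only [Matrix.sub_apply, Matrix.add_apply, Matrix.smul_apply, smul_eq_mul] at h3
    have h4 : (0:ℝ) ≤ (K * V₀) i j := by simpa using (eLE_mul hK0 hV₀0) i j
    have h5 : (0:ℝ) ≤ (1 : Matrix m m ℝ) i j := by simpa using eLE_one i j
    have h7 : (1:ℝ) ≤ t⁻¹ := by
      rw [show t⁻¹ = 1/t by ring, le_div_iff₀ ht0]
      linarith
    have h6 : (1:ℝ) ≤ t⁻¹ * t⁻¹ := by nlinarith
    have h8 : (0:ℝ) ≤ t⁻¹ * t⁻¹ * (1-t) := mul_nonneg (by positivity) (by linarith)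
    simp only [Matrix.add_apply]
    nlinarith
  -- spectral radius of C₀ is < 1
  have hspecC₀ : specRad C₀ < 1 := by
    apply specRad_lt_of_forall one_pos
    intro mu hmu
    exact abs_lt_one_of_majorant hC₀0 hU0 hmaj hmu
  have hC₀det : IsUnit ((1:ℝ) • (1 : Matrix m m ℝ) - C₀).det :=
    isUnit_smul_one_sub_det one_pos hspecC₀
  have hF0 : entryLE 0 ((1:ℝ) • (1 : Matrix m m ℝ) - C₀)⁻¹ :=
    inv_entry_nonneg one_pos hspecC₀ hC₀0
  set F := ((1:ℝ) • (1 : Matrix m m ℝ) - C₀)⁻¹ with hFdef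
  have hF1 : ((1:ℝ) • (1 : Matrix m m ℝ) - C₀) * F = 1 := Matrix.mul_nonsing_inv _ hC₀det
  have hF2 : F * ((1:ℝ) • (1 : Matrix m m ℝ) - C₀) = 1 := Matrix.nonsing_inv_mul _ hC₀det
  rw [one_smul] at hF1 hF2
  set Yc := (t⁻¹ * t⁻¹) • F with hYcdef
  have hYc0 : entryLE 0 Yc := eLE_smul (by positivity) hF0
  have hXY : X₁ * Yc = 1 := by
    rw [hX₁C, hYcdef, Matrix.smul_mul, Matrix.mul_smul, smul_smul,
      show (t^2) * (t⁻¹ * t⁻¹) = 1 by field_simp, one_smul, hF1]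
  have hYX : Yc * X₁ = 1 := by
    rw [hX₁C, hYcdef, Matrix.smul_mul, Matrix.mul_smul, smul_smul,
      show (t⁻¹ * t⁻¹) * (t^2) = 1 by field_simp, one_smul, hF2]
  set Y := Ycᵀ with hYdef
  have hY0 : entryLE 0 Y := by intro i j; exact hYc0 j i
  have hX₁T : X₁ᵀ = t^2 • (1 : Matrix m m ℝ) - t • G₁ᵀ - H₁ᵀ := by
    rw [hX₁def, Matrix.transpose_sub, Matrix.transpose_sub, Matrix.transpose_smul,
      Matrix.transpose_smul, Matrix.transpose_one]
  have hXTY : X₁ᵀ * Y = 1 := by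
    rw [hYdef, ← Matrix.transpose_mul, hYX, Matrix.transpose_one]
  have hYXT : Y * X₁ᵀ = 1 := by
    rw [hYdef, ← Matrix.transpose_mul, hXY, Matrix.transpose_one]
  -- expansion of X₁ᵀ * Y
  have hexp : t^2 • Y - t • (G₁ᵀ * Y) - H₁ᵀ * Y = 1 := by
    have h9 : (t^2 • (1 : Matrix m m ℝ) - t • G₁ᵀ - H₁ᵀ) * Y
        = t^2 • Y - t • (G₁ᵀ * Y) - H₁ᵀ * Y := by
      rw [Matrix.sub_mul, Matrix.sub_mul, Matrix.smul_mul, Matrix.smul_mul, Matrix.one_mul]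
    rw [← h9, ← hX₁T]
    exact hXTY
  have hH₁T0 : entryLE 0 H₁ᵀ := fun i j => hSP₁ j i
  set Uh := Matrix.fromBlocks (t • Y) (t • (Y * H₁ᵀ)) Y (1 + Y * H₁ᵀ) with hUhdef
  have hYH0 : entryLE 0 (Y * H₁ᵀ) := eLE_mul hY0 hH₁T0
  have hUh0 : entryLE 0 Uh := by
    intro i j
    rcases i with i | i <;> rcases j with j | j
    · simpa [hUhdef] using (eLE_smul ht0.le hY0) i j
    · simpa [hUhdef] using (eLE_smul ht0.le hYH0) i j
    · simpa [hUhdef] using hY0 i j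
    · simpa [hUhdef] using (eLE_add eLE_one hYH0) i j
  -- block identity
  set W₁ : Matrix (m ⊕ m) (m ⊕ m) ℝ := Matrix.fromBlocks G₁ᵀ H₁ᵀ (1 : Matrix m m ℝ) 0
    with hW₁def
  have hW₁0 : entryLE 0 W₁ := eLE_blockW hRP₁ hSP₁
  have hb11 : t • Y - t⁻¹ • (G₁ᵀ * (t • Y) + H₁ᵀ * Y) = t⁻¹ • (1 : Matrix m m ℝ) := by
    rw [← hexp, Matrix.mul_smul]
    match_scalars <;> field_simp <;> ring
  have hb12 : t • (Y * H₁ᵀ) - t⁻¹ • (G₁ᵀ * (t • (Y * H₁ᵀ)) + H₁ᵀ * (1 + Y * H₁ᵀ)) = 0 := by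
    have hstep : t • (Y * H₁ᵀ) - t⁻¹ • (G₁ᵀ * (t • (Y * H₁ᵀ)) + H₁ᵀ * (1 + Y * H₁ᵀ))
        = (t • Y - t⁻¹ • (G₁ᵀ * (t • Y) + H₁ᵀ * Y)) * H₁ᵀ - t⁻¹ • H₁ᵀ := by
      simp only [Matrix.sub_mul, Matrix.smul_mul, Matrix.add_mul, Matrix.mul_add,
        Matrix.mul_one, Matrix.mul_smul, Matrix.mul_assoc, smul_add]
      module
    rw [hstep, hb11, Matrix.smul_mul, Matrix.one_mul, sub_self]
  have hblock : Uh - (t⁻¹ • W₁) * Uh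
      = Matrix.fromBlocks (t⁻¹ • (1 : Matrix m m ℝ)) 0 0 1 := by
    rw [hUhdef, hW₁def, Matrix.smul_mul, Matrix.fromBlocks_multiply, Matrix.fromBlocks_smul,
      sub_eq_add_neg, Matrix.fromBlocks_neg, Matrix.fromBlocks_add]
    rw [Matrix.fromBlocks_inj]
    refine ⟨?_, ?_, ?_, ?_⟩
    · rw [← sub_eq_add_neg]; exact hb11
    · rw [← sub_eq_add_neg]; exact hb12
    · rw [← sub_eq_add_neg, Matrix.one_mul, Matrix.zero_mul, add_zero, smul_smul,
        inv_mul_cancel₀ ht0.ne', one_smul, sub_self]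
    · rw [← sub_eq_add_neg, Matrix.one_mul, Matrix.zero_mul, add_zero, smul_smul,
        inv_mul_cancel₀ ht0.ne', one_smul, add_sub_cancel_right]
  have hgoal : entryLE (1 + (t⁻¹ • W₁) * Uh) Uh := by
    intro i j
    have h5 : Uh i j - ((t⁻¹ • W₁) * Uh) i j
        = (Matrix.fromBlocks (t⁻¹ • (1 : Matrix m m ℝ)) 0 0 1) i j := by
      rw [← Matrix.sub_apply, hblock]
    have h7 : (1:ℝ) ≤ t⁻¹ := by
      rw [show t⁻¹ = 1/t by ring, le_div_iff₀ ht0]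
      linarith
    have h6 : (1 : Matrix (m ⊕ m) (m ⊕ m) ℝ) i j
        ≤ (Matrix.fromBlocks (t⁻¹ • (1 : Matrix m m ℝ)) 0 0 1) i j := by
      rw [← Matrix.fromBlocks_one]
      rcases i with i | i <;> rcases j with j | j
      · simp only [Matrix.fromBlocks_apply₁₁, Matrix.smul_apply, smul_eq_mul]
        have h8 : (0:ℝ) ≤ (1 : Matrix m m ℝ) i j := by simpa using eLE_one i j
        nlinarith
      · simp
      · simp
      · simp
    simp only [Matrix.add_apply]
    linarith
  rw [hW₁eq]
  exact specRad_lt_of_majorant ht0 hW₁0 hUh0 hgoal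

end Key

theorem stmt8 {n : ℕ} (A P₁ R₁ S₁ P₂ R₂ S₂ : Matrix (Fin n) (Fin n) ℝ)
    (hAsym : Aᵀ = A) (hAinv : IsUnit A.det)
    -- `A` is monotone
    (hmono : entryLE 0 A⁻¹)
    -- two double weak splittings of type II
    (hsplit₁ : A = P₁ - R₁ + S₁) (hPinv₁ : IsUnit P₁.det)
    (hRP₁ : entryLE 0 (R₁ * P₁⁻¹)) (hSP₁ : entryLE 0 (-(S₁ * P₁⁻¹)))
    (hsplit₂ : A = P₂ - R₂ + S₂) (hPinv₂ : IsUnit P₂.det)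
    (hRP₂ : entryLE 0 (R₂ * P₂⁻¹)) (hSP₂ : entryLE 0 (-(S₂ * P₂⁻¹)))
    -- both splittings are convergent
    (hconv₁ : specRad (itMatII P₁ R₁ S₁) < 1)
    (hconv₂ : specRad (itMatII P₂ R₂ S₂) < 1)
    (hP : entryLE P₁ P₂) (hS : entryLE S₂ S₁) :
    specRad (itMatII P₁ R₁ S₁) ≤ specRad (itMatII P₂ R₂ S₂) ∧
      specRad (itMatII P₂ R₂ S₂) < 1 := by
  rcases Nat.eq_zero_or_pos n with hn | hn
  · subst hn
    haveI : Subsingleton (Matrix (Fin 0 ⊕ Fin 0) (Fin 0 ⊕ Fin 0) ℂ) :=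
      ⟨fun a b => by ext i j; exact isEmptyElim i⟩
    have h0 : ∀ (B : Matrix (Fin 0 ⊕ Fin 0) (Fin 0 ⊕ Fin 0) ℝ), specRad B = 0 := by
      intro B
      have hsp : spectrum ℂ (B.map Complex.ofReal) = ∅ := by
        ext z
        simp only [Set.mem_empty_iff_false, iff_false]
        rw [spectrum.mem_iff]
        simp only [not_not]
        exact isUnit_of_subsingleton _
      rw [specRad, hsp, Set.image_empty, Real.sSup_empty]
    refine ⟨?_, hconv₂⟩
    rw [h0, h0]
  · haveI : Nonempty (Fin n) := ⟨⟨0, hn⟩⟩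
    refine ⟨?_, hconv₂⟩
    by_contra hcon
    push_neg at hcon
    have h2nn : 0 ≤ specRad (itMatII P₂ R₂ S₂) := specRad_nonneg _
    have hkey := keyStep A P₁ R₁ S₁ P₂ R₂ S₂ hAinv hmono hsplit₁ hPinv₁ hRP₁ hSP₁
      hsplit₂ hPinv₂ hRP₂ hSP₂ hconv₁ hP hS
      (t := (specRad (itMatII P₂ R₂ S₂) + specRad (itMatII P₁ R₁ S₁)) / 2)
      (by linarith) (by linarith) (by linarith)
    linarith
end
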